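/- arXiv:1707.01036 — 6 statements merged into one kernel-verified Lean document; each statement's English description precedes it below -/
import Mathlib

section
/- Let (a,b) ⊂ ℝ, let f : (a,b) → (a,b) be a C¹ diffeomorphism, let φ : (a,b) → (a,b) be a C¹ involution (φ ∘ φ = id, φ ≠ id), and let c ∈ (a,b) be a fixed point of φ. Let x_c ∈ (a,b). Then a differentiable function x : (a,b) → (a,b) satisfies x'(t) = f(x(φ(t))) for all t ∈ (a,b) together with x(c) = x_c if and only if x is twice differentiable, x'(t) ∈ (a,b) for all t, and x satisfies x''(t) = f'(f⁻¹(x'(t)))·f(x(t))·φ'(t) for all t ∈ (a,b) together with x(c) = x_c and x'(c) = f(x_c). -/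
open Set Real

lemma gr_right {F F' : ℝ → ℝ} {α β C : ℝ}
    (hF : ∀ t ∈ Icc α β, HasDerivAt F (F' t) t)
    (hb : ∀ t ∈ Icc α β, |F' t| ≤ C * |F t|)
    (h0 : F α = 0) : ∀ t ∈ Icc α β, F t = 0 := by
  intro t ht
  have key := norm_le_gronwallBound_of_norm_deriv_right_le
    (f := F) (f' := F') (δ := 0) (K := C) (ε := 0) (a := α) (b := β)
    (fun s hs => (hF s hs).continuousAt.continuousWithinAt)
    (fun s hs => (hF s (Ico_subset_Icc_self hs)).hasDerivWithinAt)
    (by simp [h0])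
    (fun s hs => by simpa using hb s (Ico_subset_Icc_self hs))
  have := key t ht
  rw [gronwallBound_ε0_δ0] at this
  have : |F t| ≤ 0 := by simpa using this
  exact abs_eq_zero.mp (le_antisymm this (abs_nonneg _))

lemma gr_left {F F' : ℝ → ℝ} {α β C : ℝ}
    (hF : ∀ t ∈ Icc α β, HasDerivAt F (F' t) t)
    (hb : ∀ t ∈ Icc α β, |F' t| ≤ C * |F t|)
    (h0 : F β = 0) : ∀ t ∈ Icc α β, F t = 0 := by
  intro t ht
  have hmem : ∀ s ∈ Icc α β, α + β - s ∈ Icc α β := by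
    intro s hs
    constructor <;> [linarith [hs.2]; linarith [hs.1]]
  have key := gr_right (F := fun s => F (α + β - s)) (F' := fun s => F' (α + β - s) * (-1))
    (α := α) (β := β) (C := C)
    (fun s hs => (hF _ (hmem s hs)).comp s (by simpa using (hasDerivAt_id s).const_sub (α + β)))
    (fun s hs => by
      simp only [mul_neg_one, abs_neg]
      exact hb _ (hmem s hs))
    (by simpa using h0)
  have := key (α + β - t) (hmem t ht)
  simpa using this


/-- A differentiable function `x : (a,b) → (a,b)` solves
`x'(t) = f(x(φ(t)))`, `x(c) = x_c` if and only if it is twice differentiable,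
`x'(t) ∈ (a,b)`, and solves `x''(t) = f'(f⁻¹(x'(t)))·f(x(t))·φ'(t)`,
`x(c) = x_c`, `x'(c) = f(x_c)`.  Here `f` is a C¹ diffeomorphism of `(a,b)`
with inverse `fi` and derivative `f'`, and `φ` is a C¹ involution of `(a,b)`
with derivative `φ'` and fixed point `c`. -/
theorem stmt_0 (a b c x_c : ℝ) (hab : a < b)
    (f fi f' fi' φ φ' : ℝ → ℝ)
    (hfmap : Set.MapsTo f (Set.Ioo a b) (Set.Ioo a b))
    (hfimap : Set.MapsTo fi (Set.Ioo a b) (Set.Ioo a b))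
    (hfi₁ : ∀ t ∈ Set.Ioo a b, fi (f t) = t)
    (hfi₂ : ∀ t ∈ Set.Ioo a b, f (fi t) = t)
    (hf' : ∀ t ∈ Set.Ioo a b, HasDerivAt f (f' t) t)
    (hf'cont : ContinuousOn f' (Set.Ioo a b))
    (hfi' : ∀ t ∈ Set.Ioo a b, HasDerivAt fi (fi' t) t)
    (hfi'cont : ContinuousOn fi' (Set.Ioo a b))
    (hφmap : Set.MapsTo φ (Set.Ioo a b) (Set.Ioo a b))
    (hφinv : ∀ t ∈ Set.Ioo a b, φ (φ t) = t)
    (hφne : ∃ t ∈ Set.Ioo a b, φ t ≠ t)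
    (hφ' : ∀ t ∈ Set.Ioo a b, HasDerivAt φ (φ' t) t)
    (hφ'cont : ContinuousOn φ' (Set.Ioo a b))
    (hc : c ∈ Set.Ioo a b) (hφc : φ c = c)
    (hxc : x_c ∈ Set.Ioo a b)
    (x : ℝ → ℝ)
    (hxmap : Set.MapsTo x (Set.Ioo a b) (Set.Ioo a b)) :
    ((∀ t ∈ Set.Ioo a b, HasDerivAt x (f (x (φ t))) t) ∧ x c = x_c)
    ↔
    ((∀ t ∈ Set.Ioo a b, DifferentiableAt ℝ x t) ∧
     (∀ t ∈ Set.Ioo a b, DifferentiableAt ℝ (deriv x) t) ∧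
     (∀ t ∈ Set.Ioo a b, deriv x t ∈ Set.Ioo a b) ∧
     (∀ t ∈ Set.Ioo a b,
       deriv (deriv x) t = f' (fi (deriv x t)) * f (x t) * φ' t) ∧
     x c = x_c ∧ deriv x c = f x_c) := by
  have hIopen : IsOpen (Set.Ioo a b) := isOpen_Ioo
  constructor
  · rintro ⟨hx, hxc0⟩
    have hdx : ∀ t ∈ Set.Ioo a b, deriv x t = f (x (φ t)) := fun t ht => (hx t ht).deriv
    have hderiv2 : ∀ t ∈ Set.Ioo a b, HasDerivAt (deriv x)
        (f' (x (φ t)) * (f (x (φ (φ t))) * φ' t)) t := by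
      intro t ht
      have hφt := hφmap ht
      have hxφt := hxmap hφt
      have h1 : HasDerivAt (fun s => f (x (φ s)))
          (f' (x (φ t)) * (f (x (φ (φ t))) * φ' t)) t :=
        (hf' _ hxφt).comp t ((hx (φ t) hφt).comp t (hφ' t ht))
      have heq : deriv x =ᶠ[nhds t] fun s => f (x (φ s)) :=
        Filter.eventually_of_mem (hIopen.mem_nhds ht) hdx
      exact h1.congr_of_eventuallyEq heq
    refine ⟨fun t ht => (hx t ht).differentiableAt,
      fun t ht => (hderiv2 t ht).differentiableAt, ?_, ?_, hxc0, ?_⟩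
    · intro t ht
      rw [hdx t ht]
      exact hfmap (hxmap (hφmap ht))
    · intro t ht
      rw [(hderiv2 t ht).deriv, hdx t ht, hfi₁ _ (hxmap (hφmap ht)), hφinv t ht]
      ring
    · rw [hdx c hc, hφc, hxc0]
  · rintro ⟨hd1, hd2, hmem, hode, hxc0, hdc⟩
    refine ⟨?_, hxc0⟩
    have hinv_f : ∀ y ∈ Set.Ioo a b, f' (fi y) * fi' y = 1 := by
      intro y hy
      have h1 : HasDerivAt (fun s => f (fi s)) (f' (fi y) * fi' y) y :=
        (hf' _ (hfimap hy)).comp y (hfi' y hy)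
      have h2 : HasDerivAt (fun s => f (fi s)) 1 y := by
        have heq : (fun s => f (fi s)) =ᶠ[nhds y] id :=
          Filter.eventually_of_mem (hIopen.mem_nhds hy) (fun s hs => hfi₂ s hs)
        exact (hasDerivAt_id y).congr_of_eventuallyEq heq
      exact h1.unique h2
    have hinv_φ : ∀ t ∈ Set.Ioo a b, φ' (φ t) * φ' t = 1 := by
      intro t ht
      have h1 : HasDerivAt (fun s => φ (φ s)) (φ' (φ t) * φ' t) t :=
        (hφ' _ (hφmap ht)).comp t (hφ' t ht)
      have h2 : HasDerivAt (fun s => φ (φ s)) 1 t := by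
        have heq : (fun s => φ (φ s)) =ᶠ[nhds t] id :=
          Filter.eventually_of_mem (hIopen.mem_nhds ht) (fun s hs => hφinv s hs)
        exact (hasDerivAt_id t).congr_of_eventuallyEq heq
      exact h1.unique h2
    set u : ℝ → ℝ := fun t => fi (deriv x t) with hu_def
    have humem : ∀ t ∈ Set.Ioo a b, u t ∈ Set.Ioo a b := fun t ht => hfimap (hmem t ht)
    have hxu : ∀ t ∈ Set.Ioo a b, f (u t) = deriv x t := fun t ht => hfi₂ _ (hmem t ht)
    have hx' : ∀ t ∈ Set.Ioo a b, HasDerivAt x (f (u t)) t := by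
      intro t ht
      rw [hxu t ht]
      exact (hd1 t ht).hasDerivAt
    have hu' : ∀ t ∈ Set.Ioo a b, HasDerivAt u (f (x t) * φ' t) t := by
      intro t ht
      have h1 : HasDerivAt u (fi' (deriv x t) * deriv (deriv x) t) t :=
        (hfi' _ (hmem t ht)).comp t (hd2 t ht).hasDerivAt
      rw [hode t ht] at h1
      convert h1 using 1
      have h2 := hinv_f (deriv x t) (hmem t ht)
      linear_combination (f (x t) * φ' t) * h2.symm
    have hxφ' : ∀ t ∈ Set.Ioo a b, HasDerivAt (fun s => x (φ s)) (f (u (φ t)) * φ' t) t :=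
      fun t ht => (hx' (φ t) (hφmap ht)).comp t (hφ' t ht)
    have huφ' : ∀ t ∈ Set.Ioo a b, HasDerivAt (fun s => u (φ s)) (f (x (φ t))) t := by
      intro t ht
      have h1 : HasDerivAt (fun s => u (φ s)) (f (x (φ t)) * φ' (φ t) * φ' t) t :=
        (hu' (φ t) (hφmap ht)).comp t (hφ' t ht)
      convert h1 using 1
      have h2 := hinv_φ t ht
      linear_combination (f (x (φ t))) * h2.symm
    set A : ℝ → ℝ := fun t => x t - u (φ t) with hA_def
    set B : ℝ → ℝ := fun t => x (φ t) - u t with hB_def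
    set Ad : ℝ → ℝ := fun t => f (u t) - f (x (φ t)) with hAd_def
    set Bd : ℝ → ℝ := fun t => f (u (φ t)) * φ' t - f (x t) * φ' t with hBd_def
    set K : ℝ → ℝ := fun t => A t * A t + B t * B t with hK_def
    set Kd : ℝ → ℝ := fun t => 2 * A t * Ad t + 2 * B t * Bd t with hKd_def
    have hA' : ∀ t ∈ Set.Ioo a b, HasDerivAt A (Ad t) t :=
      fun t ht => (hx' t ht).sub (huφ' t ht)
    have hB' : ∀ t ∈ Set.Ioo a b, HasDerivAt B (Bd t) t :=
      fun t ht => (hxφ' t ht).sub (hu' t ht)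
    have hK' : ∀ t ∈ Set.Ioo a b, HasDerivAt K (Kd t) t := by
      intro t ht
      have h1 := ((hA' t ht).mul (hA' t ht)).add ((hB' t ht).mul (hB' t ht))
      convert h1 using 1
      rfl
      show 2 * A t * Ad t + 2 * B t * Bd t = _
      ring
      all_goals rfl
    have hKc : K c = 0 := by
      have huc : u c = x_c := by rw [hu_def]; simp only; rw [hdc, hfi₁ _ hxc]
      simp only [hK_def, hA_def, hB_def, hφc, hxc0, huc]
      ring
    -- main: for every T in the interval, K T = 0
    intro T hT
    have hJI : Set.Icc (min c T) (max c T) ⊆ Set.Ioo a b := by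
      intro s hs
      exact ⟨lt_of_lt_of_le (lt_min hc.1 hT.1) hs.1, lt_of_le_of_lt hs.2 (max_lt hc.2 hT.2)⟩
    set J := Set.Icc (min c T) (max c T) with hJ_def
    have hcJ : c ∈ J := ⟨min_le_left _ _, le_max_left _ _⟩
    have hTJ : T ∈ J := ⟨min_le_right _ _, le_max_right _ _⟩
    have hJcomp : IsCompact J := isCompact_Icc
    have hxcont : ContinuousOn x J := fun s hs => ((hd1 s (hJI hs)).continuousAt).continuousWithinAt
    have hucont : ContinuousOn u J := fun s hs => ((hu' s (hJI hs)).differentiableAt.continuousAt).continuousWithinAt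
    have hφcont : ContinuousOn φ J := fun s hs => ((hφ' s (hJI hs)).differentiableAt.continuousAt).continuousWithinAt
    have hxφcont : ContinuousOn (fun s => x (φ s)) J :=
      fun s hs => ((hxφ' s (hJI hs)).differentiableAt.continuousAt).continuousWithinAt
    have huφcont : ContinuousOn (fun s => u (φ s)) J :=
      fun s hs => ((huφ' s (hJI hs)).differentiableAt.continuousAt).continuousWithinAt
    set V := x '' J ∪ u '' J ∪ ((fun s => x (φ s)) '' J ∪ (fun s => u (φ s)) '' J) with hV_def
    have hVcomp : IsCompact V :=
      ((hJcomp.image_of_continuousOn hxcont).union (hJcomp.image_of_continuousOn hucont)).union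
        ((hJcomp.image_of_continuousOn hxφcont).union (hJcomp.image_of_continuousOn huφcont))
    have hVI : V ⊆ Set.Ioo a b := by
      rintro v (hv | hv) <;> rcases hv with hv | hv <;> rcases hv with ⟨s, hs, rfl⟩
      · exact hxmap (hJI hs)
      · exact humem _ (hJI hs)
      · exact hxmap (hφmap (hJI hs))
      · exact humem _ (hφmap (hJI hs))
    have hVne : V.Nonempty := ⟨x c, Or.inl (Or.inl ⟨c, hcJ, rfl⟩)⟩
    set m := sInf V with hm_def
    set M := sSup V with hM_def
    have hmV : m ∈ V := hVcomp.sInf_mem hVne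
    have hMV : M ∈ V := hVcomp.sSup_mem hVne
    have hVIcc : ∀ v ∈ V, v ∈ Set.Icc m M :=
      fun v hv => ⟨csInf_le hVcomp.bddBelow hv, le_csSup hVcomp.bddAbove hv⟩
    have hIccI : Set.Icc m M ⊆ Set.Ioo a b := by
      intro y hy
      exact ⟨lt_of_lt_of_le (hVI hmV).1 hy.1, lt_of_le_of_lt hy.2 (hVI hMV).2⟩
    obtain ⟨L, hL⟩ := (isCompact_Icc (a := m) (b := M)).exists_bound_of_continuousOn
      (hf'cont.mono hIccI)
    set L0 := max L 0 with hL0_def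
    have hL0 : 0 ≤ L0 := le_max_right _ _
    have hLb : ∀ y ∈ Set.Icc m M, ‖f' y‖ ≤ L0 := fun y hy => (hL y hy).trans (le_max_left _ _)
    have hLip : ∀ y ∈ Set.Icc m M, ∀ z ∈ Set.Icc m M, |f z - f y| ≤ L0 * |z - y| := by
      intro y hy z hz
      have := (convex_Icc m M).norm_image_sub_le_of_norm_hasDerivWithin_le
        (fun w hw => (hf' w (hIccI hw)).hasDerivWithinAt) hLb hy hz
      simpa [Real.norm_eq_abs] using this
    obtain ⟨Mp, hMp⟩ := hJcomp.exists_bound_of_continuousOn (hφ'cont.mono hJI)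
    set Mφ0 := max Mp 0 with hMφ0_def
    have hMφ0 : 0 ≤ Mφ0 := le_max_right _ _
    have hMb : ∀ t ∈ J, |φ' t| ≤ Mφ0 := by
      intro t ht
      calc |φ' t| = ‖φ' t‖ := (Real.norm_eq_abs _).symm
        _ ≤ Mp := hMp t ht
        _ ≤ Mφ0 := le_max_left _ _
    have hxJ : ∀ s ∈ J, x s ∈ Set.Icc m M := fun s hs => hVIcc _ (Or.inl (Or.inl ⟨s, hs, rfl⟩))
    have huJ : ∀ s ∈ J, u s ∈ Set.Icc m M := fun s hs => hVIcc _ (Or.inl (Or.inr ⟨s, hs, rfl⟩))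
    have hxφJ : ∀ s ∈ J, x (φ s) ∈ Set.Icc m M := fun s hs => hVIcc _ (Or.inr (Or.inl ⟨s, hs, rfl⟩))
    have huφJ : ∀ s ∈ J, u (φ s) ∈ Set.Icc m M := fun s hs => hVIcc _ (Or.inr (Or.inr ⟨s, hs, rfl⟩))
    have hbound : ∀ t ∈ J, |Kd t| ≤ (L0 * (1 + Mφ0)) * |K t| := by
      intro t ht
      have hAdb : |Ad t| ≤ L0 * |B t| := by
        have h := hLip (x (φ t)) (hxφJ t ht) (u t) (huJ t ht)
        calc |Ad t| = |f (u t) - f (x (φ t))| := rfl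
          _ ≤ L0 * |u t - x (φ t)| := h
          _ = L0 * |B t| := by rw [abs_sub_comm]
      have hBdb : |Bd t| ≤ L0 * |A t| * Mφ0 := by
        have h := hLip (x t) (hxJ t ht) (u (φ t)) (huφJ t ht)
        have h2 := hMb t ht
        calc |Bd t| = |f (u (φ t)) - f (x t)| * |φ' t| := by
              rw [← abs_mul]
              congr 1
              show f (u (φ t)) * φ' t - f (x t) * φ' t = (f (u (φ t)) - f (x t)) * φ' t
              ring
          _ ≤ (L0 * |u (φ t) - x t|) * Mφ0 :=
              mul_le_mul h h2 (abs_nonneg _) (by positivity)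
          _ = L0 * |A t| * Mφ0 := by rw [abs_sub_comm]
      have h1 : |Kd t| ≤ 2 * |A t| * |Ad t| + 2 * |B t| * |Bd t| := by
        calc |Kd t| ≤ |2 * A t * Ad t| + |2 * B t * Bd t| := abs_add_le _ _
          _ = 2 * |A t| * |Ad t| + 2 * |B t| * |Bd t| := by
              rw [abs_mul, abs_mul, abs_mul, abs_mul]
              simp [abs_two]
      have hKpos : |K t| = A t * A t + B t * B t :=
        abs_of_nonneg (add_nonneg (mul_self_nonneg _) (mul_self_nonneg _))
      rw [hKpos]
      have p1 : 2 * |A t| * |Ad t| ≤ 2 * |A t| * (L0 * |B t|) :=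
        mul_le_mul_of_nonneg_left hAdb (by positivity)
      have p2 : 2 * |B t| * |Bd t| ≤ 2 * |B t| * (L0 * |A t| * Mφ0) :=
        mul_le_mul_of_nonneg_left hBdb (by positivity)
      have e1 : A t * A t = |A t| * |A t| := (abs_mul_abs_self _).symm
      have e2 : B t * B t = |B t| * |B t| := (abs_mul_abs_self _).symm
      calc |Kd t| ≤ 2 * |A t| * |Ad t| + 2 * |B t| * |Bd t| := h1
        _ ≤ 2 * |A t| * (L0 * |B t|) + 2 * |B t| * (L0 * |A t| * Mφ0) := by linarith [p1, p2]
        _ ≤ L0 * (1 + Mφ0) * (|A t| * |A t| + |B t| * |B t|) := by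
            nlinarith [mul_nonneg hL0 (sq_nonneg (|A t| - |B t|)),
              mul_nonneg (mul_nonneg hL0 hMφ0) (sq_nonneg (|A t| - |B t|))]
        _ = L0 * (1 + Mφ0) * (A t * A t + B t * B t) := by rw [← e1, ← e2]
    have hKT : K T = 0 := by
      rcases le_total c T with hcT | hTc
      · have hsub : Set.Icc c T ⊆ J := fun s hs =>
          ⟨le_trans (min_le_left _ _) hs.1, le_trans hs.2 (le_max_right _ _)⟩
        exact gr_right (fun s hs => hK' s (hJI (hsub hs)))
          (fun s hs => hbound s (hsub hs)) hKc T ⟨hcT, le_refl T⟩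
      · have hsub : Set.Icc T c ⊆ J := fun s hs =>
          ⟨le_trans (min_le_right _ _) hs.1, le_trans hs.2 (le_max_left _ _)⟩
        exact gr_left (fun s hs => hK' s (hJI (hsub hs)))
          (fun s hs => hbound s (hsub hs)) hKc T ⟨le_refl T, hTc⟩
    have hBT : B T = 0 := by
      have h : A T * A T + B T * B T = 0 := hKT
      have h2 : B T * B T = 0 := by
        nlinarith [mul_self_nonneg (A T), mul_self_nonneg (B T)]
      exact mul_self_eq_zero.mp h2
    have huT : u T = x (φ T) := by
      have h : x (φ T) - u T = 0 := hBT
      linarith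
    have h := hx' T hT
    rwa [huT] at h
end

section
/- Let T > 0 and I = [−T,T]. If x : I → ℝ is differentiable, satisfies x'(t) = x(t)·x(−t) for all t ∈ I, and x(−T) = x(T), then x(t) = 0 for all t ∈ I. -/
/-- If a differentiable `x : [−T,T] → ℝ` satisfies
`x'(t) = x(t)·x(−t)` on `I = [−T,T]` and `x(−T) = x(T)`, then `x ≡ 0` on `I`. -/
theorem stmt_4 (T : ℝ) (hT : 0 < T) (x : ℝ → ℝ)
    (hx : ∀ t ∈ Set.Icc (-T) T,
      HasDerivWithinAt x (x t * x (-t)) (Set.Icc (-T) T) t)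
    (hbc : x (-T) = x T) :
    ∀ t ∈ Set.Icc (-T) T, x t = 0 := by
  have hTT : -T < T := by linarith
  have hcont : ContinuousOn x (Set.Icc (-T) T) :=
    fun t ht => (hx t ht).continuousWithinAt
  -- interior derivative
  have hderiv : ∀ t ∈ Set.Ioo (-T) T, HasDerivAt x (x t * x (-t)) t := by
    intro t ht
    exact (hx t (Set.Ioo_subset_Icc_self ht)).hasDerivAt
      (Icc_mem_nhds ht.1 ht.2)
  -- Rolle: a zero of x t * x (-t)
  obtain ⟨ξ, hξ, hξ0⟩ := exists_hasDerivAt_eq_zero hTT hcont hbc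
    (fun t ht => hderiv t ht)
  -- hence a zero of x at an interior point
  have hzero : ∃ t₀ ∈ Set.Ioo (-T) T, x t₀ = 0 := by
    rcases mul_eq_zero.mp hξ0 with h | h
    · exact ⟨ξ, hξ, h⟩
    · exact ⟨-ξ, ⟨by linarith [hξ.2], by linarith [hξ.1]⟩, h⟩
  obtain ⟨t₀, ht₀, ht₀0⟩ := hzero
  -- clamp function
  set p : ℝ → ℝ := fun t => max (-T) (min T t) with hp
  have hpmem : ∀ t : ℝ, p t ∈ Set.Icc (-T) T := by
    intro t
    constructor
    · exact le_max_left _ _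
    · simp only [hp, max_le_iff, min_le_iff]
      exact ⟨le_of_lt hTT, Or.inl le_rfl⟩
  have hpeq : ∀ t ∈ Set.Icc (-T) T, p t = t := by
    intro t ht
    simp only [hp]
    rw [min_eq_right ht.2, max_eq_right ht.1]
  -- bound on x on the interval
  obtain ⟨C, hC⟩ := isCompact_Icc.exists_bound_of_continuousOn hcont
  have hCb : ∀ t : ℝ, |x (-(p t))| ≤ C.toNNReal := by
    intro t
    have h1 : -(p t) ∈ Set.Icc (-T) T := by
      have := hpmem t
      exact ⟨by linarith [this.2], by linarith [this.1]⟩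
    calc |x (-(p t))| ≤ C := hC _ h1
      _ ≤ C.toNNReal := Real.le_coe_toNNReal C
  -- the vector field
  set v : ℝ → ℝ → ℝ := fun t y => x (-(p t)) * y with hv
  have hvlip : ∀ t : ℝ, LipschitzOnWith C.toNNReal (v t) (Set.univ : Set ℝ) := by
    intro t
    apply LipschitzWith.lipschitzOnWith
    rw [lipschitzWith_iff_dist_le_mul]
    intro a b
    simp only [hv, Real.dist_eq]
    have : x (-(p t)) * a - x (-(p t)) * b = x (-(p t)) * (a - b) := by ring
    rw [this, abs_mul]
    exact mul_le_mul_of_nonneg_right (hCb t) (abs_nonneg _)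
  have key : Set.EqOn x (fun _ => (0 : ℝ)) (Set.Icc (-T) T) := by
    apply ODE_solution_unique_of_mem_Icc (K := C.toNNReal) (v := v)
      (s := fun _ => (Set.univ : Set ℝ)) (t₀ := t₀) (fun t _ => hvlip t) ht₀
    · exact hcont
    · intro t ht
      have : v t (x t) = x t * x (-t) := by
        simp only [hv]
        rw [hpeq t (Set.Ioo_subset_Icc_self ht)]
        ring
      rw [this]
      exact hderiv t ht
    · intro t _; trivial
    · exact continuousOn_const
    · intro t _
      have : v t ((fun _ => (0:ℝ)) t) = 0 := by simp [hv]
      rw [this]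
      exact hasDerivAt_const t 0
    · intro t _; trivial
    · exact ht₀0
  intro t ht
  exact key ht
end

section
/- Suppose m ∈ ℝ with mT ∉ πℤ (in particular m ≠ 0). Then for every integrable function h : I → ℝ, the function u(t) := ∫_{−T}^{T} Ḡ_m(t,s)·h(s) ds is the unique solution of the problem x'(t) + m·x(−t) = h(t) for a.e. t ∈ I, x(−T) = x(T); that is, u is absolutely continuous on I, u(−T) = u(T), u'(t) + m·u(−t) = h(t) for almost every t ∈ I, and any absolutely continuous function v : I → ℝ with v(−T) = v(T) and v'(t) + m·v(−t) = h(t) for a.e. t ∈ I equals u on I. -/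
open MeasureTheory

/-- The Green's function `Ḡ_m` of the periodic problem
`x'(t) + m·x(−t) = h(t)` on `[−T,T]`, `x(−T) = x(T)`, defined by
`2·sin(mT)·Ḡ_m(t,s) = cos(m(T−s−t)) + sin(m(T+s−t))` if `−t ≤ s < t`;
`cos(m(T−s−t)) − sin(m(T−s+t))` if `−s ≤ t < s`;
`cos(m(T+s+t)) + sin(m(T+s−t))` if `s < −|t|`;
`cos(m(T+s+t)) − sin(m(T−s+t))` if `t < −|s|`; and on the diagonal by
`cos(m(T−2t)) − sin(mT)` if `m > 0` and `cos(m(T−2t)) + sin(mT)` if `m < 0`. -/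
noncomputable def Gbar (T m t s : ℝ) : ℝ :=
  (if -t ≤ s ∧ s < t then Real.cos (m * (T - s - t)) + Real.sin (m * (T + s - t))
   else if -s ≤ t ∧ t < s then Real.cos (m * (T - s - t)) - Real.sin (m * (T - s + t))
   else if s < -|t| then Real.cos (m * (T + s + t)) + Real.sin (m * (T + s - t))
   else if t < -|s| then Real.cos (m * (T + s + t)) - Real.sin (m * (T - s + t))
   else if 0 < m then Real.cos (m * (T - 2 * t)) - Real.sin (m * T)
   else Real.cos (m * (T - 2 * t)) + Real.sin (m * T)) /
    (2 * Real.sin (m * T))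

section GbarHelpers
open Real

lemma Gbar_eq1 {T m t s : ℝ} (h1 : -t ≤ s) (h2 : s < t) :
    Gbar T m t s = (Real.cos (m * (T - s - t)) + Real.sin (m * (T + s - t))) / (2 * Real.sin (m * T)) := by
  unfold Gbar; rw [if_pos ⟨h1, h2⟩]

lemma Gbar_eq2 {T m t s : ℝ} (h1 : -s ≤ t) (h2 : t < s) :
    Gbar T m t s = (Real.cos (m * (T - s - t)) - Real.sin (m * (T - s + t))) / (2 * Real.sin (m * T)) := by
  unfold Gbar; rw [if_neg (by rintro ⟨a, b⟩; linarith), if_pos ⟨h1, h2⟩]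

lemma Gbar_eq3 {T m t s : ℝ} (h : s < -|t|) :
    Gbar T m t s = (Real.cos (m * (T + s + t)) + Real.sin (m * (T + s - t))) / (2 * Real.sin (m * T)) := by
  have h1 := le_abs_self t
  have h2 := neg_abs_le t
  unfold Gbar
  rw [if_neg (by rintro ⟨a, b⟩; linarith), if_neg (by rintro ⟨a, b⟩; linarith), if_pos h]

lemma Gbar_eq4 {T m t s : ℝ} (h : t < -|s|) :
    Gbar T m t s = (Real.cos (m * (T + s + t)) - Real.sin (m * (T - s + t))) / (2 * Real.sin (m * T)) := by
  have h1 := le_abs_self s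
  have h2 := neg_abs_le s
  have h3 := le_abs_self t
  have h4 := neg_abs_le t
  unfold Gbar
  rw [if_neg (by rintro ⟨a, b⟩; linarith), if_neg (by rintro ⟨a, b⟩; linarith),
    if_neg (by intro hc; linarith), if_pos h]

lemma Gbar_abs_le {T m : ℝ} (t s : ℝ) : |Gbar T m t s| ≤ 2 / |2 * Real.sin (m * T)| := by
  unfold Gbar
  rw [abs_div]
  rcases eq_or_ne (2 * Real.sin (m * T)) 0 with hD | hD
  · simp [hD]
  · rw [div_le_div_iff_of_pos_right (abs_pos.mpr hD)]
    have c1 : ∀ x : ℝ, |Real.cos x| ≤ 1 := fun x => Real.abs_cos_le_one x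
    have s1 : ∀ x : ℝ, |Real.sin x| ≤ 1 := fun x => Real.abs_sin_le_one x
    split_ifs <;>
      [exact (abs_add_le _ _).trans (by linarith [c1 (m*(T-s-t)), s1 (m*(T+s-t))]);
       exact (abs_sub _ _).trans (by linarith [c1 (m*(T-s-t)), s1 (m*(T-s+t))]);
       exact (abs_add_le _ _).trans (by linarith [c1 (m*(T+s+t)), s1 (m*(T+s-t))]);
       exact (abs_sub _ _).trans (by linarith [c1 (m*(T+s+t)), s1 (m*(T-s+t))]);
       exact (abs_sub _ _).trans (by linarith [c1 (m*(T-2*t)), s1 (m*T)]);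
       exact (abs_add_le _ _).trans (by linarith [c1 (m*(T-2*t)), s1 (m*T)])]

lemma hd_lin (m a x : ℝ) : HasDerivAt (fun s : ℝ => m * (a + s)) m x := by
  simpa using ((hasDerivAt_id x).const_add a).const_mul m

lemma hd_lin' (m a x : ℝ) : HasDerivAt (fun s : ℝ => m * (a - s)) (-m) x := by
  simpa using ((hasDerivAt_id x).const_sub a).const_mul m

lemma hd1 (m a x : ℝ) : HasDerivAt (fun s => Real.sin (m * (a + s))) (m * Real.cos (m * (a + x))) x := by
  simpa [mul_comm] using (hd_lin m a x).sin

lemma hd2 (m a x : ℝ) : HasDerivAt (fun s => Real.cos (m * (a + s))) (-(m * Real.sin (m * (a + x)))) x := by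
  simpa [mul_comm] using (hd_lin m a x).cos

lemma hd3 (m a x : ℝ) : HasDerivAt (fun s => Real.sin (m * (a - s))) (-(m * Real.cos (m * (a - x)))) x := by
  simpa [mul_comm] using (hd_lin' m a x).sin

lemma hd4 (m a x : ℝ) : HasDerivAt (fun s => Real.cos (m * (a - s))) (m * Real.sin (m * (a - x))) x := by
  simpa [mul_comm] using (hd_lin' m a x).cos

lemma hPA {m : ℝ} (hm : m ≠ 0) (T σ x : ℝ) :
    HasDerivAt (fun s => (Real.sin (m * (T - σ + s)) - Real.cos (m * (T + σ + s))) / m)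
      (Real.cos (m * (T - σ + x)) + Real.sin (m * (T + σ + x))) x := by
  have := ((hd1 m (T - σ) x).sub (hd2 m (T + σ) x)).div_const m
  refine this.congr_deriv ?_
  field_simp
  ring

lemma hPB {m : ℝ} (hm : m ≠ 0) (T σ x : ℝ) :
    HasDerivAt (fun s => (Real.sin (m * (T - σ + s)) - Real.cos (m * (T - σ - s))) / m)
      (Real.cos (m * (T - σ + x)) - Real.sin (m * (T - σ - x))) x := by
  have := ((hd1 m (T - σ) x).sub (hd4 m (T - σ) x)).div_const m
  refine this.congr_deriv ?_
  field_simp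

lemma hPB2 {m : ℝ} (hm : m ≠ 0) (T σ x : ℝ) :
    HasDerivAt (fun s => (-Real.sin (m * (T + σ - s)) - Real.cos (m * (T + σ + s))) / m)
      (Real.cos (m * (T + σ - x)) + Real.sin (m * (T + σ + x))) x := by
  have := (((hd3 m (T + σ) x).neg).sub (hd2 m (T + σ) x)).div_const m
  refine this.congr_deriv ?_
  field_simp
  ring

lemma hPC {m : ℝ} (hm : m ≠ 0) (T σ x : ℝ) :
    HasDerivAt (fun s => (-Real.sin (m * (T + σ - s)) - Real.cos (m * (T - σ - s))) / m)
      (Real.cos (m * (T + σ - x)) - Real.sin (m * (T - σ - x))) x := by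
  have := (((hd3 m (T + σ) x).neg).sub (hd4 m (T - σ) x)).div_const m
  refine this.congr_deriv ?_
  field_simp

lemma measurable_Gbar (T m : ℝ) : Measurable fun p : ℝ × ℝ => Gbar T m p.1 p.2 := by
  unfold Gbar
  apply Measurable.div _ measurable_const
  apply Measurable.ite ((measurableSet_le measurable_fst.neg measurable_snd).inter
    (measurableSet_lt measurable_snd measurable_fst)) (by fun_prop)
  apply Measurable.ite ((measurableSet_le measurable_snd.neg measurable_fst).inter
    (measurableSet_lt measurable_fst measurable_snd)) (by fun_prop)
  apply Measurable.ite (measurableSet_lt measurable_snd measurable_fst.abs.neg) (by fun_prop)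
  apply Measurable.ite (measurableSet_lt measurable_fst measurable_snd.abs.neg) (by fun_prop)
  by_cases h0 : 0 < m <;> simp [h0] <;> fun_prop

-- interval integral congr on open interval
lemma ii_congr_open {f g : ℝ → ℝ} {a b : ℝ} (hab : a ≤ b)
    (h : ∀ x ∈ Set.Ioo a b, f x = g x) :
    ∫ x in a..b, f x = ∫ x in a..b, g x := by
  rw [intervalIntegral.integral_of_le hab, intervalIntegral.integral_of_le hab,
    integral_Ioc_eq_integral_Ioo, integral_Ioc_eq_integral_Ioo]
  exact setIntegral_congr_fun measurableSet_Ioo h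

lemma ii_integrable_open {f g : ℝ → ℝ} {a b : ℝ} (hab : a ≤ b) (hg : Continuous g)
    (h : ∀ x ∈ Set.Ioo a b, f x = g x) : IntervalIntegrable f volume a b := by
  rw [intervalIntegrable_iff_integrableOn_Ioo_of_le hab]
  exact ((hg.integrableOn_Icc).mono_set Set.Ioo_subset_Icc_self).congr_fun
    (fun x hx => (h x hx).symm) measurableSet_Ioo

/-- Evaluate an interval integral of a function equal to `f/D` on the open interval,
where `P` is an antiderivative of `f`. -/
lemma eval_piece {a b D : ℝ} {F P f : ℝ → ℝ} (hab : a ≤ b)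
    (hF : ∀ s ∈ Set.Ioo a b, F s = f s / D) (hf : Continuous f)
    (hP : ∀ x, HasDerivAt P (f x) x) :
    ∫ s in a..b, F s = (P b - P a) / D := by
  rw [ii_congr_open hab hF, intervalIntegral.integral_div,
    intervalIntegral.integral_eq_sub_of_hasDerivAt (fun x _ => hP x)
      (hf.intervalIntegrable a b)]

section Val
variable (T m : ℝ) {σ s : ℝ}

lemma valA (h1 : s ≤ σ) (h2 : s < -σ) :
    Gbar T m (-s) σ = (Real.cos (m * (T - σ + s)) + Real.sin (m * (T + σ + s))) / (2 * Real.sin (m * T)) := by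
  rw [Gbar_eq1 (by simpa using h1) (by linarith)]
  ring_nf

lemma valB (h1 : -σ < s) (h2 : s ≤ σ) :
    Gbar T m (-s) σ = (Real.cos (m * (T - σ + s)) - Real.sin (m * (T - σ - s))) / (2 * Real.sin (m * T)) := by
  rw [Gbar_eq2 (by simpa using h2) (by linarith)]
  ring_nf

lemma valB2 (h1 : σ < s) (h2 : s < -σ) :
    Gbar T m (-s) σ = (Real.cos (m * (T + σ - s)) + Real.sin (m * (T + σ + s))) / (2 * Real.sin (m * T)) := by
  rw [Gbar_eq3 (show σ < -|-s| by rw [abs_neg, ← neg_neg σ, neg_lt_neg_iff]; exact (abs_lt.mpr ⟨by linarith, by linarith⟩).trans_le le_rfl)]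
  ring_nf

lemma valC (h1 : σ < s) (h2 : -σ < s) :
    Gbar T m (-s) σ = (Real.cos (m * (T + σ - s)) - Real.sin (m * (T - σ - s))) / (2 * Real.sin (m * T)) := by
  rw [Gbar_eq4 (show -s < -|σ| by rw [neg_lt_neg_iff]; exact abs_lt.mpr ⟨by linarith, h1⟩)]
  ring_nf

end Val

set_option maxHeartbeats 3000000 in
lemma key (T m : ℝ) (hm : m ≠ 0) (hD : Real.sin (m * T) ≠ 0)
    {t σ : ℝ} (ht1 : -T ≤ t) (ht2 : t ≤ T) (hσ1 : -T < σ) (hσ2 : σ < T)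
    (hσ0 : σ ≠ 0) (hσt : σ ≠ t) :
    Gbar T m t σ - Gbar T m (-T) σ + m * (∫ s in (-T)..t, Gbar T m (-s) σ) =
      (if -T < σ ∧ σ ≤ t then (1:ℝ) else 0) := by
  have hD2 : (2 : ℝ) * Real.sin (m * T) ≠ 0 := mul_ne_zero two_ne_zero hD
  have expand : ∀ r : ℝ, r = r := fun r => rfl
  rcases hσ0.lt_or_gt with hneg | hpos
  · -- σ < 0
    have hGT0 : Gbar T m (-T) σ = (Real.cos (m * (T + σ + -T)) - Real.sin (m * (T - σ + -T))) / (2 * Real.sin (m * T)) :=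
      Gbar_eq4 (by rw [abs_of_neg hneg, neg_neg]; linarith)
    rcases lt_or_ge t σ with hc | hc
    · -- t < σ : single piece A
      have hI := eval_piece (F := fun s => Gbar T m (-s) σ)
        (P := fun s => (Real.sin (m * (T - σ + s)) - Real.cos (m * (T + σ + s))) / m)
        (f := fun s => Real.cos (m * (T - σ + s)) + Real.sin (m * (T + σ + s)))
        (D := 2 * Real.sin (m * T)) ht1
        (fun s hs => valA T m (by linarith [hs.2]) (by linarith [hs.2]))
        (by fun_prop) (fun x => hPA hm T σ x)
      rw [if_neg (by rintro ⟨-, hb⟩; linarith), hI,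
        Gbar_eq4 (show t < -|σ| by rw [abs_of_neg hneg, neg_neg]; exact hc), hGT0]
      field_simp
      simp only [mul_add, mul_sub, mul_neg, Real.cos_add, Real.cos_sub, Real.sin_add,
        Real.sin_sub, Real.cos_neg, Real.sin_neg]
      ring
    · have hc' : σ < t := lt_of_le_of_ne hc hσt
      rcases lt_or_ge t (-σ) with hc2 | hc2
      · -- σ < t < -σ : pieces A on (-T,σ), B2 on (σ,t)
        have hi1 : IntervalIntegrable (fun s => Gbar T m (-s) σ) volume (-T) σ :=
          ii_integrable_open (le_of_lt hσ1) (by fun_prop)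
            (fun s hs => valA T m (le_of_lt hs.2) (by linarith [hs.2]))
        have hi2 : IntervalIntegrable (fun s => Gbar T m (-s) σ) volume σ t :=
          ii_integrable_open hc (by fun_prop)
            (fun s hs => valB2 T m hs.1 (by linarith [hs.2]))
        have e1 := eval_piece (F := fun s => Gbar T m (-s) σ)
          (P := fun s => (Real.sin (m * (T - σ + s)) - Real.cos (m * (T + σ + s))) / m)
          (f := fun s => Real.cos (m * (T - σ + s)) + Real.sin (m * (T + σ + s)))
          (D := 2 * Real.sin (m * T)) (le_of_lt hσ1)
          (fun s hs => valA T m (le_of_lt hs.2) (by linarith [hs.2]))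
          (by fun_prop) (fun x => hPA hm T σ x)
        have e2 := eval_piece (F := fun s => Gbar T m (-s) σ)
          (P := fun s => (-Real.sin (m * (T + σ - s)) - Real.cos (m * (T + σ + s))) / m)
          (f := fun s => Real.cos (m * (T + σ - s)) + Real.sin (m * (T + σ + s)))
          (D := 2 * Real.sin (m * T)) hc
          (fun s hs => valB2 T m hs.1 (by linarith [hs.2]))
          (by fun_prop) (fun x => hPB2 hm T σ x)
        rw [if_pos ⟨hσ1, le_of_lt hc'⟩,
          ← intervalIntegral.integral_add_adjacent_intervals hi1 hi2, e1, e2,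
          Gbar_eq3 (show σ < -|t| by
            have := abs_lt.mpr ⟨(by linarith : -(-σ) < t), hc2⟩; linarith), hGT0]
        field_simp
        simp only [mul_add, mul_sub, mul_neg, Real.cos_add, Real.cos_sub, Real.sin_add,
          Real.sin_sub, Real.cos_neg, Real.sin_neg]
        linear_combination (2 * Real.sin (m * T)) * Real.sin_sq_add_cos_sq (m * σ)
      · -- -σ ≤ t : pieces A on (-T,σ), B2 on (σ,-σ), C on (-σ,t)
        have hi1 : IntervalIntegrable (fun s => Gbar T m (-s) σ) volume (-T) σ :=
          ii_integrable_open (le_of_lt hσ1) (by fun_prop)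
            (fun s hs => valA T m (le_of_lt hs.2) (by linarith [hs.2]))
        have hi2 : IntervalIntegrable (fun s => Gbar T m (-s) σ) volume σ (-σ) :=
          ii_integrable_open (by linarith) (by fun_prop)
            (fun s hs => valB2 T m hs.1 hs.2)
        have hi3 : IntervalIntegrable (fun s => Gbar T m (-s) σ) volume (-σ) t :=
          ii_integrable_open hc2 (by fun_prop)
            (fun s hs => valC T m (by linarith [hs.1]) hs.1)
        have e1 := eval_piece (F := fun s => Gbar T m (-s) σ)
          (P := fun s => (Real.sin (m * (T - σ + s)) - Real.cos (m * (T + σ + s))) / m)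
          (f := fun s => Real.cos (m * (T - σ + s)) + Real.sin (m * (T + σ + s)))
          (D := 2 * Real.sin (m * T)) (le_of_lt hσ1)
          (fun s hs => valA T m (le_of_lt hs.2) (by linarith [hs.2]))
          (by fun_prop) (fun x => hPA hm T σ x)
        have e2 := eval_piece (F := fun s => Gbar T m (-s) σ)
          (P := fun s => (-Real.sin (m * (T + σ - s)) - Real.cos (m * (T + σ + s))) / m)
          (f := fun s => Real.cos (m * (T + σ - s)) + Real.sin (m * (T + σ + s)))
          (D := 2 * Real.sin (m * T)) (by linarith : σ ≤ -σ)
          (fun s hs => valB2 T m hs.1 hs.2)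
          (by fun_prop) (fun x => hPB2 hm T σ x)
        have e3 := eval_piece (F := fun s => Gbar T m (-s) σ)
          (P := fun s => (-Real.sin (m * (T + σ - s)) - Real.cos (m * (T - σ - s))) / m)
          (f := fun s => Real.cos (m * (T + σ - s)) - Real.sin (m * (T - σ - s)))
          (D := 2 * Real.sin (m * T)) hc2
          (fun s hs => valC T m (by linarith [hs.1]) hs.1)
          (by fun_prop) (fun x => hPC hm T σ x)
        rw [if_pos ⟨hσ1, le_of_lt hc'⟩,
          ← intervalIntegral.integral_add_adjacent_intervals (hi1.trans hi2) hi3,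
          ← intervalIntegral.integral_add_adjacent_intervals hi1 hi2, e1, e2, e3,
          Gbar_eq1 (show -t ≤ σ by linarith) hc', hGT0]
        field_simp
        simp only [mul_add, mul_sub, mul_neg, Real.cos_add, Real.cos_sub, Real.sin_add,
          Real.sin_sub, Real.cos_neg, Real.sin_neg]
        linear_combination (2 * Real.sin (m * T)) * Real.sin_sq_add_cos_sq (m * σ)
  · -- 0 < σ
    have hGT0 : Gbar T m (-T) σ = (Real.cos (m * (T + σ + -T)) - Real.sin (m * (T - σ + -T))) / (2 * Real.sin (m * T)) :=
      Gbar_eq4 (by rw [abs_of_pos hpos]; linarith)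
    rcases lt_or_ge t (-σ) with hc | hc
    · -- t < -σ : single piece A
      have hI := eval_piece (F := fun s => Gbar T m (-s) σ)
        (P := fun s => (Real.sin (m * (T - σ + s)) - Real.cos (m * (T + σ + s))) / m)
        (f := fun s => Real.cos (m * (T - σ + s)) + Real.sin (m * (T + σ + s)))
        (D := 2 * Real.sin (m * T)) ht1
        (fun s hs => valA T m (by linarith [hs.2]) (by linarith [hs.2]))
        (by fun_prop) (fun x => hPA hm T σ x)
      rw [if_neg (by rintro ⟨-, hb⟩; linarith), hI,
        Gbar_eq4 (show t < -|σ| by rw [abs_of_pos hpos]; exact hc), hGT0]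
      field_simp
      simp only [mul_add, mul_sub, mul_neg, Real.cos_add, Real.cos_sub, Real.sin_add,
        Real.sin_sub, Real.cos_neg, Real.sin_neg]
      ring
    · rcases lt_or_ge t σ with hc2 | hc2
      · -- -σ ≤ t < σ : pieces A on (-T,-σ), B on (-σ,t)
        have hi1 : IntervalIntegrable (fun s => Gbar T m (-s) σ) volume (-T) (-σ) :=
          ii_integrable_open (by linarith) (by fun_prop)
            (fun s hs => valA T m (by linarith [hs.2]) hs.2)
        have hi2 : IntervalIntegrable (fun s => Gbar T m (-s) σ) volume (-σ) t :=
          ii_integrable_open hc (by fun_prop)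
            (fun s hs => valB T m hs.1 (by linarith [hs.2]))
        have e1 := eval_piece (F := fun s => Gbar T m (-s) σ)
          (P := fun s => (Real.sin (m * (T - σ + s)) - Real.cos (m * (T + σ + s))) / m)
          (f := fun s => Real.cos (m * (T - σ + s)) + Real.sin (m * (T + σ + s)))
          (D := 2 * Real.sin (m * T)) (by linarith : -T ≤ -σ)
          (fun s hs => valA T m (by linarith [hs.2]) hs.2)
          (by fun_prop) (fun x => hPA hm T σ x)
        have e2 := eval_piece (F := fun s => Gbar T m (-s) σ)
          (P := fun s => (Real.sin (m * (T - σ + s)) - Real.cos (m * (T - σ - s))) / m)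
          (f := fun s => Real.cos (m * (T - σ + s)) - Real.sin (m * (T - σ - s)))
          (D := 2 * Real.sin (m * T)) hc
          (fun s hs => valB T m hs.1 (by linarith [hs.2]))
          (by fun_prop) (fun x => hPB hm T σ x)
        rw [if_neg (by rintro ⟨-, hb⟩; linarith),
          ← intervalIntegral.integral_add_adjacent_intervals hi1 hi2, e1, e2,
          Gbar_eq2 hc hc2, hGT0]
        field_simp
        simp only [mul_add, mul_sub, mul_neg, Real.cos_add, Real.cos_sub, Real.sin_add,
          Real.sin_sub, Real.cos_neg, Real.sin_neg]
        ring
      · -- σ < t : pieces A on (-T,-σ), B on (-σ,σ), C on (σ,t)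
        have hc' : σ < t := lt_of_le_of_ne hc2 hσt
        have hi1 : IntervalIntegrable (fun s => Gbar T m (-s) σ) volume (-T) (-σ) :=
          ii_integrable_open (by linarith) (by fun_prop)
            (fun s hs => valA T m (by linarith [hs.2]) hs.2)
        have hi2 : IntervalIntegrable (fun s => Gbar T m (-s) σ) volume (-σ) σ :=
          ii_integrable_open (by linarith) (by fun_prop)
            (fun s hs => valB T m hs.1 (le_of_lt hs.2))
        have hi3 : IntervalIntegrable (fun s => Gbar T m (-s) σ) volume σ t :=
          ii_integrable_open hc2 (by fun_prop)
            (fun s hs => valC T m hs.1 (by linarith [hs.1]))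
        have e1 := eval_piece (F := fun s => Gbar T m (-s) σ)
          (P := fun s => (Real.sin (m * (T - σ + s)) - Real.cos (m * (T + σ + s))) / m)
          (f := fun s => Real.cos (m * (T - σ + s)) + Real.sin (m * (T + σ + s)))
          (D := 2 * Real.sin (m * T)) (by linarith : -T ≤ -σ)
          (fun s hs => valA T m (by linarith [hs.2]) hs.2)
          (by fun_prop) (fun x => hPA hm T σ x)
        have e2 := eval_piece (F := fun s => Gbar T m (-s) σ)
          (P := fun s => (Real.sin (m * (T - σ + s)) - Real.cos (m * (T - σ - s))) / m)
          (f := fun s => Real.cos (m * (T - σ + s)) - Real.sin (m * (T - σ - s)))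
          (D := 2 * Real.sin (m * T)) (by linarith : -σ ≤ σ)
          (fun s hs => valB T m hs.1 (le_of_lt hs.2))
          (by fun_prop) (fun x => hPB hm T σ x)
        have e3 := eval_piece (F := fun s => Gbar T m (-s) σ)
          (P := fun s => (-Real.sin (m * (T + σ - s)) - Real.cos (m * (T - σ - s))) / m)
          (f := fun s => Real.cos (m * (T + σ - s)) - Real.sin (m * (T - σ - s)))
          (D := 2 * Real.sin (m * T)) hc2
          (fun s hs => valC T m hs.1 (by linarith [hs.1]))
          (by fun_prop) (fun x => hPC hm T σ x)
        rw [if_pos ⟨hσ1, le_of_lt hc'⟩,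
          ← intervalIntegral.integral_add_adjacent_intervals (hi1.trans hi2) hi3,
          ← intervalIntegral.integral_add_adjacent_intervals hi1 hi2, e1, e2, e3,
          Gbar_eq1 (show -t ≤ σ by linarith) hc', hGT0]
        field_simp
        simp only [mul_add, mul_sub, mul_neg, Real.cos_add, Real.cos_sub, Real.sin_add,
          Real.sin_sub, Real.cos_neg, Real.sin_neg]
        linear_combination (2 * Real.sin (m * T)) * Real.sin_sq_add_cos_sq (m * σ)

lemma Gbar_per (T m : ℝ) {σ : ℝ} (hσ1 : -T < σ) (hσ2 : σ < T) (hσ0 : σ ≠ 0) :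
    Gbar T m (-T) σ = Gbar T m T σ := by
  rcases hσ0.lt_or_gt with hneg | hpos
  · rw [Gbar_eq4 (show -T < -|σ| by rw [abs_of_neg hneg, neg_neg]; exact hσ1),
      Gbar_eq1 (by linarith : -T ≤ σ) hσ2]
    simp only [mul_add, mul_sub, mul_neg, Real.cos_add, Real.cos_sub, Real.sin_add,
      Real.sin_sub, Real.cos_neg, Real.sin_neg]
    ring
  · rw [Gbar_eq4 (show -T < -|σ| by rw [abs_of_pos hpos]; linarith),
      Gbar_eq1 (by linarith : -T ≤ σ) hσ2]
    simp only [mul_add, mul_sub, mul_neg, Real.cos_add, Real.cos_sub, Real.sin_add,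
      Real.sin_sub, Real.cos_neg, Real.sin_neg]
    ring

set_option maxHeartbeats 1000000 in
lemma uniq (T m : ℝ) (hT : 0 < T) (hsin : Real.sin (m * T) ≠ 0)
    {w gw : ℝ → ℝ} (hgw : IntegrableOn gw (Set.Icc (-T) T))
    (hrep : ∀ x ∈ Set.Icc (-T) T, w x = w (-T) + ∫ s in (-T)..x, gw s)
    (hode : ∀ᵐ s ∂(volume.restrict (Set.Icc (-T) T)), gw s + m * w (-s) = 0)
    (hper : w (-T) = w T) :
    ∀ x ∈ Set.Icc (-T) T, w x = 0 := by
  have hTT : -T ≤ T := by linarith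
  -- continuity of w on the interval
  have hwc : ContinuousOn w (Set.Icc (-T) T) := by
    have hprim : ContinuousOn (fun x => ∫ s in (-T)..x, gw s) (Set.Icc (-T) T) := by
      have := intervalIntegral.continuousOn_primitive_interval
        (a := -T) (b := T) (f := gw) (μ := volume) (by rwa [Set.uIcc_of_le hTT])
      rwa [Set.uIcc_of_le hTT] at this
    exact (continuousOn_const.add hprim).congr (fun x hx => hrep x hx)
  -- continuous extension of w to ℝ
  set wbar : ℝ → ℝ := fun x => w (max (-T) (min T x)) with hwbar_def
  have hmem : ∀ x : ℝ, max (-T) (min T x) ∈ Set.Icc (-T) T :=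
    fun x => ⟨le_max_left _ _, max_le hTT (min_le_left _ _)⟩
  have hwbar_cont : Continuous wbar := by
    apply hwc.comp_continuous _ hmem
    exact continuous_const.max (continuous_const.min continuous_id)
  have hwbar_eq : ∀ x ∈ Set.Icc (-T) T, wbar x = w x := by
    intro x hx
    simp only [hwbar_def]
    rw [min_eq_right hx.2, max_eq_right hx.1]
  have hq : Continuous fun s => wbar (-s) := hwbar_cont.comp continuous_neg
  -- representation with the continuous extension
  have hrep' : ∀ x ∈ Set.Icc (-T) T, w x = w (-T) - m * ∫ s in (-T)..x, wbar (-s) := by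
    intro x hx
    have hae : ∀ᵐ s ∂volume, s ∈ Set.uIoc (-T) x → gw s = -(m * wbar (-s)) := by
      have h1 := (ae_restrict_iff' measurableSet_Icc).mp hode
      filter_upwards [h1] with s hs hmem'
      rw [Set.uIoc_of_le hx.1] at hmem'
      have hsI : s ∈ Set.Icc (-T) T := ⟨le_of_lt hmem'.1, le_trans hmem'.2 hx.2⟩
      have hsI' : -s ∈ Set.Icc (-T) T := ⟨by linarith [hsI.2], by linarith [hsI.1]⟩
      rw [hwbar_eq (-s) hsI']
      have := hs hsI
      linarith
    rw [hrep x hx, intervalIntegral.integral_congr_ae hae,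
      intervalIntegral.integral_neg, intervalIntegral.integral_const_mul]
    ring
  -- the two primitives
  set Φ : ℝ → ℝ := fun x => w (-T) - m * ∫ s in (-T)..x, wbar (-s) with hΦ_def
  set Ψ : ℝ → ℝ := fun x => (w (-T) - m * ∫ s in (-T)..T, wbar (-s))
      + m * ∫ s in (-T)..x, wbar s with hΨ_def
  have hΦd : ∀ x, HasDerivAt Φ (-(m * wbar (-x))) x := by
    intro x
    have h1 : HasDerivAt (fun y => ∫ s in (-T)..y, wbar (-s)) (wbar (-x)) x :=
      intervalIntegral.integral_hasDerivAt_right (hq.intervalIntegrable _ _)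
        (hq.stronglyMeasurableAtFilter _ _) hq.continuousAt
    exact (h1.const_mul m).const_sub (w (-T))
  have hΨd : ∀ x, HasDerivAt Ψ (m * wbar x) x := by
    intro x
    have h1 : HasDerivAt (fun y => ∫ s in (-T)..y, wbar s) (wbar x) x :=
      intervalIntegral.integral_hasDerivAt_right (hwbar_cont.intervalIntegrable _ _)
        (hwbar_cont.stronglyMeasurableAtFilter _ _) hwbar_cont.continuousAt
    exact (h1.const_mul m).const_add (w (-T) - m * ∫ s in (-T)..T, wbar (-s))
  have hΦ_eq : ∀ x ∈ Set.Icc (-T) T, Φ x = w x := fun x hx => (hrep' x hx).symm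
  have hΨ_eq : ∀ x ∈ Set.Icc (-T) T, Ψ x = w (-x) := by
    intro x hx
    have hx' : -x ∈ Set.Icc (-T) T := ⟨by linarith [hx.2], by linarith [hx.1]⟩
    have h1 := hrep' (-x) hx'
    have h2 : ∫ s in (-T)..(-x), wbar (-s) = ∫ s in x..T, wbar s := by
      rw [intervalIntegral.integral_comp_neg (fun s => wbar s)]
      norm_num
    have h3 : (∫ s in (-T)..x, wbar s) + ∫ s in x..T, wbar s = ∫ s in (-T)..T, wbar s :=
      intervalIntegral.integral_add_adjacent_intervals
        (hwbar_cont.intervalIntegrable _ _) (hwbar_cont.intervalIntegrable _ _)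
    have h5 : ∫ s in (-T)..T, wbar (-s) = ∫ s in (-T)..T, wbar s := by
      rw [intervalIntegral.integral_comp_neg (fun s => wbar s)]
      norm_num
    have h4 : ∫ s in x..T, wbar s = (∫ s in (-T)..T, wbar s) - ∫ s in (-T)..x, wbar s := by
      linarith
    rw [h1, h2, hΨ_def, h4, h5]
    ring
  -- the explicit comparison solution
  set w0 : ℝ := w 0 with hw0_def
  have hdc : ∀ x : ℝ, HasDerivAt (fun y => Real.cos (m * y)) (-(m * Real.sin (m * x))) x := by
    intro x
    simpa [mul_comm] using ((hasDerivAt_id x).const_mul m).cos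
  have hds : ∀ x : ℝ, HasDerivAt (fun y => Real.sin (m * y)) (m * Real.cos (m * x)) x := by
    intro x
    simpa [mul_comm] using ((hasDerivAt_id x).const_mul m).sin
  set φ1 : ℝ → ℝ := fun x => w0 * (Real.cos (m * x) - Real.sin (m * x)) with hφ1_def
  set φ2 : ℝ → ℝ := fun x => w0 * (Real.cos (m * x) + Real.sin (m * x)) with hφ2_def
  have hφ1d : ∀ x, HasDerivAt φ1 (-(m * φ2 x)) x := by
    intro x
    have := ((hdc x).sub (hds x)).const_mul w0
    refine this.congr_deriv ?_
    simp only [hφ2_def]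
    ring
  have hφ2d : ∀ x, HasDerivAt φ2 (m * φ1 x) x := by
    intro x
    have := ((hdc x).add (hds x)).const_mul w0
    refine this.congr_deriv ?_
    simp only [hφ1_def]
    ring
  -- the energy function
  set ρ : ℝ → ℝ := fun x => (Φ x - φ1 x) ^ 2 + (Ψ x - φ2 x) ^ 2 with hρ_def
  have hρc : Continuous ρ := by
    have hΦc : Continuous Φ := by
      rw [continuous_iff_continuousAt]; exact fun x => (hΦd x).continuousAt
    have hΨc : Continuous Ψ := by
      rw [continuous_iff_continuousAt]; exact fun x => (hΨd x).continuousAt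
    fun_prop
  have hρd : ∀ x ∈ Set.Icc (-T) T, HasDerivAt ρ 0 x := by
    intro x hx
    have hx' : -x ∈ Set.Icc (-T) T := ⟨by linarith [hx.2], by linarith [hx.1]⟩
    have d1 := (((hΦd x).sub (hφ1d x)).pow 2).add (((hΨd x).sub (hφ2d x)).pow 2)
    refine d1.congr_deriv ?_
    have e1 : wbar (-x) = Ψ x := by rw [hwbar_eq (-x) hx', hΨ_eq x hx]
    have e2 : wbar x = Φ x := by rw [hwbar_eq x hx, hΦ_eq x hx]
    rw [e1, e2]
    simp only [Pi.sub_apply]; ring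
  have hconst : ∀ x ∈ Set.Icc (-T) T, ρ x = ρ (-T) :=
    constant_of_has_deriv_right_zero hρc.continuousOn
      (fun x hx => (hρd x (Set.Ico_subset_Icc_self hx)).hasDerivWithinAt)
  have h0mem : (0 : ℝ) ∈ Set.Icc (-T) T := ⟨by linarith, by linarith⟩
  have hρ0 : ρ 0 = 0 := by
    have e1 : Φ 0 = w0 := by rw [hΦ_eq 0 h0mem, hw0_def]
    have e2 : Ψ 0 = w0 := by rw [hΨ_eq 0 h0mem, hw0_def]; norm_num
    simp [hρ_def, e1, e2, hφ1_def, hφ2_def]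
  have hρzero : ∀ x ∈ Set.Icc (-T) T, ρ x = 0 := by
    intro x hx
    rw [hconst x hx, ← hconst 0 h0mem, hρ0]
  -- w equals the explicit solution
  have hwφ : ∀ x ∈ Set.Icc (-T) T, w x = w0 * (Real.cos (m * x) - Real.sin (m * x)) := by
    intro x hx
    have h1 : (Φ x - φ1 x) ^ 2 + (Ψ x - φ2 x) ^ 2 = 0 := hρzero x hx
    have h2 : (Φ x - φ1 x) ^ 2 = 0 := by
      nlinarith [sq_nonneg (Φ x - φ1 x), sq_nonneg (Ψ x - φ2 x)]
    have h3 : Φ x = φ1 x :=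
      sub_eq_zero.mp ((pow_eq_zero_iff (two_ne_zero)).mp h2)
    rw [← hΦ_eq x hx, h3, hφ1_def]
  -- periodicity forces w0 = 0
  have hTmem : T ∈ Set.Icc (-T) T := ⟨hTT, le_refl T⟩
  have hTmem' : -T ∈ Set.Icc (-T) T := ⟨le_refl _, hTT⟩
  have e1 := hwφ T hTmem
  have e2 := hwφ (-T) hTmem'
  rw [hper] at e2
  rw [e1] at e2
  simp only [mul_neg, Real.cos_neg, Real.sin_neg] at e2
  have hw00 : w0 = 0 := by
    have : w0 * Real.sin (m * T) = 0 := by linear_combination (-(1:ℝ)/2) * e2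
    rcases mul_eq_zero.mp this with h | h
    · exact h
    · exact absurd h hsin
  intro x hx
  rw [hwφ x hx, hw00, zero_mul]

end GbarHelpers

/-- `x` is an absolutely continuous solution of `x'(t) + m·x(−t) = h(t)` a.e.
on `I = [−T,T]` with `x(−T) = x(T)`: absolute continuity is expressed by the
existence of an integrable a.e. derivative `g` with
`x(t) = x(−T) + ∫_{−T}^t g(s) ds`. -/
def IsSol (T m : ℝ) (h x : ℝ → ℝ) : Prop :=
  (∃ g : ℝ → ℝ, IntegrableOn g (Set.Icc (-T) T) ∧
    (∀ t ∈ Set.Icc (-T) T, x t = x (-T) + ∫ s in (-T)..t, g s) ∧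
    (∀ᵐ t ∂(volume.restrict (Set.Icc (-T) T)), g t + m * x (-t) = h t)) ∧
  x (-T) = x T

set_option maxHeartbeats 2000000 in
/-- If `mT ∉ πℤ`, then for every integrable `h` the function
`u(t) = ∫_{−T}^{T} Ḡ_m(t,s)·h(s) ds` is the unique solution of
`x'(t) + m·x(−t) = h(t)` a.e. on `I`, `x(−T) = x(T)`. -/
theorem stmt_7 (T m : ℝ) (hT : 0 < T)
    (hres : ∀ k : ℤ, m * T ≠ k * Real.pi)
    (h : ℝ → ℝ) (hh : IntegrableOn h (Set.Icc (-T) T)) :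
    ∀ u : ℝ → ℝ, u = (fun t => ∫ s in (-T)..T, Gbar T m t s * h s) →
      IsSol T m h u ∧
      ∀ v : ℝ → ℝ, IsSol T m h v → ∀ t ∈ Set.Icc (-T) T, v t = u t := by
  intro u hu
  have hTT : -T ≤ T := by linarith
  have hm : m ≠ 0 := by
    rintro rfl; exact hres 0 (by simp)
  have hsin : Real.sin (m * T) ≠ 0 := by
    intro h0
    obtain ⟨n, hn⟩ := Real.sin_eq_zero_iff.mp h0
    exact hres n hn.symm
  set C : ℝ := 2 / |2 * Real.sin (m * T)| with hC_def
  obtain ⟨h', hh'meas, hh'ae⟩ : ∃ h' : ℝ → ℝ, StronglyMeasurable h' ∧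
      h =ᵐ[volume.restrict (Set.Icc (-T) T)] h' :=
    ⟨hh.1.mk h, hh.1.stronglyMeasurable_mk, hh.1.ae_eq_mk⟩
  have hh' : IntegrableOn h' (Set.Icc (-T) T) := hh.congr hh'ae
  have hsub : Set.Ioc (-T) T ⊆ Set.Icc (-T) T := Set.Ioc_subset_Icc_self
  have hh'ae2 : h =ᵐ[volume.restrict (Set.Ioc (-T) T)] h' :=
    ae_restrict_of_ae_restrict_of_subset hsub hh'ae
  have hh'μ : IntegrableOn h' (Set.Ioc (-T) T) := hh'.mono_set hsub
  have hu' : ∀ x : ℝ, u x = ∫ σ in Set.Ioc (-T) T, Gbar T m x σ * h' σ := by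
    intro x
    rw [hu]
    dsimp only
    rw [intervalIntegral.integral_of_le hTT]
    exact integral_congr_ae (hh'ae2.mono fun σ e => by dsimp only; rw [e])
  have mG : ∀ x : ℝ, Measurable fun σ => Gbar T m x σ :=
    fun x => (measurable_Gbar T m).comp (measurable_const.prodMk measurable_id)
  have hbound : ∀ x σ : ℝ, ‖Gbar T m x σ‖ ≤ C := fun x σ => by
    rw [Real.norm_eq_abs, hC_def]; exact Gbar_abs_le x σ
  have hGh : ∀ x : ℝ, IntegrableOn (fun σ => Gbar T m x σ * h' σ) (Set.Ioc (-T) T) :=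
    fun x => hh'μ.bdd_mul (mG x).aestronglyMeasurable (ae_of_all _ fun σ => hbound x σ)
  have hum : StronglyMeasurable u := by
    rw [show u = fun x => ∫ σ in Set.Ioc (-T) T, Gbar T m x σ * h' σ from funext hu']
    exact ((measurable_Gbar T m).mul
      (hh'meas.measurable.comp measurable_snd)).stronglyMeasurable.integral_prod_right'
  set M : ℝ := C * ∫ σ in Set.Ioc (-T) T, ‖h' σ‖ with hM_def
  have hub : ∀ x : ℝ, ‖u x‖ ≤ M := by
    intro x
    rw [hu' x]
    refine (norm_integral_le_integral_norm _).trans ?_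
    rw [hM_def, ← integral_const_mul]
    refine integral_mono (hGh x).norm (hh'μ.norm.const_mul C) fun σ => ?_
    simp only [norm_mul]
    exact mul_le_mul_of_nonneg_right (hbound x σ) (norm_nonneg _)
  have hfin : volume (Set.Icc (-T) T) < ⊤ := by simp [Real.volume_Icc]
  have huI : IntegrableOn u (Set.Icc (-T) T) := by
    refine Integrable.mono' (g := fun _ => M) ?_ hum.aestronglyMeasurable (ae_of_all _ hub)
    exact integrableOn_const hfin.ne
  have hunegI : IntegrableOn (fun x => u (-x)) (Set.Icc (-T) T) := by
    refine Integrable.mono' (g := fun _ => M) ?_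
      (hum.comp_measurable measurable_neg).aestronglyMeasurable
      (ae_of_all _ fun x => hub (-x))
    exact integrableOn_const hfin.ne
  -- the central representation formula
  have hkeyrep : ∀ x ∈ Set.Icc (-T) T,
      u x = u (-T) + ∫ s in (-T)..x, (h s - m * u (-s)) := by
    intro x hx
    obtain ⟨hx1, hx2⟩ := hx
    have hsubx : Set.Ioc (-T) x ⊆ Set.Icc (-T) T :=
      fun s hs => ⟨le_of_lt hs.1, le_trans hs.2 hx2⟩
    haveI : IsFiniteMeasure (volume.restrict (Set.Ioc (-T) x)) := by
      constructor
      rw [Measure.restrict_apply_univ]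
      simp [Real.volume_Ioc]
    have st1 : ∫ s in (-T)..x, (h s - m * u (-s)) =
        (∫ s in Set.Ioc (-T) x, h' s) - m * ∫ s in Set.Ioc (-T) x, u (-s) := by
      rw [intervalIntegral.integral_of_le hx1,
        integral_congr_ae (show (fun s => h s - m * u (-s))
          =ᵐ[volume.restrict (Set.Ioc (-T) x)] fun s => h' s - m * u (-s) from
          (ae_restrict_of_ae_restrict_of_subset hsubx hh'ae).mono fun s e => by
            dsimp only; rw [e]),
        integral_sub (hh'.mono_set hsubx) ((hunegI.mono_set hsubx).const_mul m),
        integral_const_mul]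
    have hFprod : Integrable (fun p : ℝ × ℝ => Gbar T m (-p.1) p.2 * h' p.2)
        ((volume.restrict (Set.Ioc (-T) x)).prod (volume.restrict (Set.Ioc (-T) T))) := by
      have h2 : Integrable (fun p : ℝ × ℝ => h' p.2)
          ((volume.restrict (Set.Ioc (-T) x)).prod (volume.restrict (Set.Ioc (-T) T))) := by
        have := (integrable_const (μ := volume.restrict (Set.Ioc (-T) x)) (1 : ℝ)).mul_prod hh'μ
        simpa using this
      refine h2.bdd_mul ?_ (ae_of_all _ fun p => hbound _ _)
      exact ((measurable_Gbar T m).comp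
        (measurable_fst.neg.prodMk measurable_snd)).aestronglyMeasurable
    have st2 : ∫ s in Set.Ioc (-T) x, u (-s) =
        ∫ σ in Set.Ioc (-T) T, (∫ s in Set.Ioc (-T) x, Gbar T m (-s) σ) * h' σ := by
      calc ∫ s in Set.Ioc (-T) x, u (-s)
          = ∫ s in Set.Ioc (-T) x, ∫ σ in Set.Ioc (-T) T, Gbar T m (-s) σ * h' σ :=
            integral_congr_ae (ae_of_all _ fun s => hu' (-s))
        _ = ∫ σ in Set.Ioc (-T) T, ∫ s in Set.Ioc (-T) x, Gbar T m (-s) σ * h' σ :=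
            integral_integral_swap hFprod
        _ = ∫ σ in Set.Ioc (-T) T, (∫ s in Set.Ioc (-T) x, Gbar T m (-s) σ) * h' σ := by
            refine integral_congr_ae (ae_of_all _ fun σ => ?_)
            dsimp only
            exact integral_mul_const _ _
    have hFi : Integrable (fun σ => (∫ s in Set.Ioc (-T) x, Gbar T m (-s) σ) * h' σ)
        (volume.restrict (Set.Ioc (-T) T)) := by
      refine hFprod.integral_prod_right.congr (ae_of_all _ fun σ => ?_)
      dsimp only
      exact integral_mul_const _ _
    have hindi : Integrable ((Set.Ioc (-T) x).indicator h')
        (volume.restrict (Set.Ioc (-T) T)) := hh'μ.indicator measurableSet_Ioc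
    have haeE : ∀ᵐ σ ∂volume.restrict (Set.Ioc (-T) T),
        Gbar T m x σ * h' σ = Gbar T m (-T) σ * h' σ + (Set.Ioc (-T) x).indicator h' σ
          - m * ((∫ s in Set.Ioc (-T) x, Gbar T m (-s) σ) * h' σ) := by
      have hEset : {a : ℝ | ¬ a ∉ ({0, x, T} : Set ℝ)} = {0, x, T} := by
        ext a; simp only [Set.mem_setOf_eq, not_not]
      have hE : ∀ᵐ σ ∂volume, σ ∉ ({0, x, T} : Set ℝ) := by
        rw [ae_iff, hEset]
        exact (Set.toFinite _).measure_zero volume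
      filter_upwards [ae_restrict_of_ae hE, ae_restrict_mem measurableSet_Ioc]
        with σ hσE hσmem
      simp only [Set.mem_insert_iff, Set.mem_singleton_iff, not_or] at hσE
      obtain ⟨hσ0, hσx, hσT⟩ := hσE
      have hk := key T m hm hsin hx1 hx2 hσmem.1 (lt_of_le_of_ne hσmem.2 hσT) hσ0 hσx
      rw [intervalIntegral.integral_of_le hx1] at hk
      rw [Set.indicator_apply]
      by_cases hmem2 : σ ∈ Set.Ioc (-T) x
      · rw [if_pos hmem2]
        rw [if_pos (Set.mem_Ioc.mp hmem2)] at hk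
        linear_combination hk * h' σ
      · rw [if_neg hmem2]
        rw [if_neg (fun hc => hmem2 (Set.mem_Ioc.mpr hc))] at hk
        linear_combination hk * h' σ
    have hind_eq : ∫ σ in Set.Ioc (-T) T, (Set.Ioc (-T) x).indicator h' σ =
        ∫ s in Set.Ioc (-T) x, h' s := by
      rw [setIntegral_indicator measurableSet_Ioc,
        Set.inter_eq_self_of_subset_right (Set.Ioc_subset_Ioc_right hx2)]
    have I1 : Integrable (fun a => Gbar T m (-T) a * h' a + (Set.Ioc (-T) x).indicator h' a)
        (volume.restrict (Set.Ioc (-T) T)) := (hGh (-T)).add hindi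
    have I2 : Integrable (fun a => m * ((∫ s in Set.Ioc (-T) x, Gbar T m (-s) a) * h' a))
        (volume.restrict (Set.Ioc (-T) T)) := hFi.const_mul m
    calc u x = ∫ σ in Set.Ioc (-T) T, Gbar T m x σ * h' σ := hu' x
      _ = ∫ σ in Set.Ioc (-T) T, ((Gbar T m (-T) σ * h' σ + (Set.Ioc (-T) x).indicator h' σ)
            - m * ((∫ s in Set.Ioc (-T) x, Gbar T m (-s) σ) * h' σ)) :=
          integral_congr_ae (haeE.mono fun σ e => by dsimp only; rw [e])
      _ = (∫ σ in Set.Ioc (-T) T, (Gbar T m (-T) σ * h' σ + (Set.Ioc (-T) x).indicator h' σ))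
            - ∫ σ in Set.Ioc (-T) T, m * ((∫ s in Set.Ioc (-T) x, Gbar T m (-s) σ) * h' σ) :=
          integral_sub I1 I2
      _ = ((∫ σ in Set.Ioc (-T) T, Gbar T m (-T) σ * h' σ)
            + ∫ σ in Set.Ioc (-T) T, (Set.Ioc (-T) x).indicator h' σ)
            - m * ∫ σ in Set.Ioc (-T) T, (∫ s in Set.Ioc (-T) x, Gbar T m (-s) σ) * h' σ := by
          rw [integral_add (hGh (-T)) hindi, integral_const_mul]
      _ = u (-T) + ∫ s in (-T)..x, (h s - m * u (-s)) := by
          rw [hu' (-T), st1, st2, hind_eq]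
          ring
  -- periodicity
  have hper : u (-T) = u T := by
    rw [hu' (-T), hu' T]
    apply integral_congr_ae
    have hEset : {a : ℝ | ¬ a ∉ ({0, T} : Set ℝ)} = {0, T} := by
      ext a; simp only [Set.mem_setOf_eq, not_not]
    have hE : ∀ᵐ σ ∂volume, σ ∉ ({0, T} : Set ℝ) := by
      rw [ae_iff, hEset]
      exact (Set.toFinite _).measure_zero volume
    filter_upwards [ae_restrict_of_ae hE, ae_restrict_mem measurableSet_Ioc]
      with σ hσE hσmem
    simp only [Set.mem_insert_iff, Set.mem_singleton_iff, not_or] at hσE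
    rw [Gbar_per T m hσmem.1 (lt_of_le_of_ne hσmem.2 hσE.2) hσE.1]
  refine ⟨⟨⟨fun s => h s - m * u (-s), hh.sub (hunegI.const_mul m), hkeyrep,
    ae_of_all _ fun t => by ring⟩, hper⟩, ?_⟩
  -- uniqueness
  intro v hv x hx
  obtain ⟨⟨gv, hgvI, hgvrep, hgvode⟩, hvper⟩ := hv
  have hgI : IntegrableOn (fun s => h s - m * u (-s)) (Set.Icc (-T) T) :=
    hh.sub (hunegI.const_mul m)
  have hwrep : ∀ y ∈ Set.Icc (-T) T, (fun s => v s - u s) y =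
      (fun s => v s - u s) (-T) + ∫ s in (-T)..y, (gv s - (h s - m * u (-s))) := by
    intro y hy
    have hss : Set.uIcc (-T) y ⊆ Set.Icc (-T) T := by
      rw [Set.uIcc_of_le hy.1]
      exact Set.Icc_subset_Icc le_rfl hy.2
    have i1 : IntervalIntegrable gv volume (-T) y := (hgvI.mono_set hss).intervalIntegrable
    have i2 : IntervalIntegrable (fun s => h s - m * u (-s)) volume (-T) y :=
      (hgI.mono_set hss).intervalIntegrable
    dsimp only
    rw [intervalIntegral.integral_sub i1 i2, hgvrep y hy, hkeyrep y hy]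
    ring
  have hwode : ∀ᵐ s ∂volume.restrict (Set.Icc (-T) T),
      (gv s - (h s - m * u (-s))) + m * ((fun s => v s - u s) (-s)) = 0 := by
    filter_upwards [hgvode] with s hs
    linarith [hs]
  have hz := uniq T m hT hsin (hgvI.sub hgI) hwrep hwode
    (by rw [hvper, hper]) x hx
  linarith [hz]
end

section
/- For all t, s ∈ I with |s| ≠ |t|, the partial derivative of Ḡ_m with respect to its first argument exists at (t,s) and satisfies ∂Ḡ_m/∂t(t,s) + m·Ḡ_m(−t,s) = 0. -/
lemma hd_cos_sub (m a t : ℝ) :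
    HasDerivAt (fun τ => Real.cos (m * (a - τ))) (Real.sin (m * (a - t)) * m) t := by
  have h : HasDerivAt (fun τ : ℝ => m * (a - τ)) (m * (-1)) t :=
    ((hasDerivAt_id t).const_sub a).const_mul m
  have := h.cos
  convert this using 1
  ring

lemma hd_sin_sub (m a t : ℝ) :
    HasDerivAt (fun τ => Real.sin (m * (a - τ))) (-(Real.cos (m * (a - t)) * m)) t := by
  have h : HasDerivAt (fun τ : ℝ => m * (a - τ)) (m * (-1)) t :=
    ((hasDerivAt_id t).const_sub a).const_mul m
  have := h.sin
  convert this using 1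
  ring

lemma hd_cos_add (m a t : ℝ) :
    HasDerivAt (fun τ => Real.cos (m * (a + τ))) (-(Real.sin (m * (a + t)) * m)) t := by
  have h : HasDerivAt (fun τ : ℝ => m * (a + τ)) (m * 1) t :=
    ((hasDerivAt_id t).const_add a).const_mul m
  have := h.cos
  convert this using 1
  ring

lemma hd_sin_add (m a t : ℝ) :
    HasDerivAt (fun τ => Real.sin (m * (a + τ))) (Real.cos (m * (a + t)) * m) t := by
  have h : HasDerivAt (fun τ : ℝ => m * (a + τ)) (m * 1) t :=
    ((hasDerivAt_id t).const_add a).const_mul m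
  have := h.sin
  convert this using 1
  ring

/-- For all `t, s ∈ I = [−T,T]` with `|s| ≠ |t|`, the partial
derivative of `Ḡ_m` with respect to its first argument exists at `(t,s)` and
`∂Ḡ_m/∂t(t,s) + m·Ḡ_m(−t,s) = 0`. -/
theorem stmt_9 (T m : ℝ) (hT : 0 < T)
    (hres : ∀ k : ℤ, m * T ≠ k * Real.pi) :
    ∀ t ∈ Set.Icc (-T) T, ∀ s ∈ Set.Icc (-T) T, |s| ≠ |t| →
      HasDerivAt (fun τ => Gbar T m τ s) (-(m * Gbar T m (-t) s)) t := by
  intro t _ s _ hne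
  rcases lt_or_gt_of_ne hne with h | h
  · -- |s| < |t|
    rcases abs_lt.mp h with ⟨h1, h2⟩  -- -|t| < s ∧ s < |t|
    rcases lt_or_ge t 0 with ht | ht
    · -- t < 0 : region 4, t < -|s|
      rw [abs_of_neg ht] at h1 h2
      -- h1 : -(-t) < s i.e. t < s ; h2 : s < -t
      have h4 : t < -|s| := by
        rcases abs_cases s with ⟨hs, _⟩ | ⟨hs, _⟩ <;> linarith
      -- Gbar (-t) s : region 1 at t' = -t
      have hg : Gbar T m (-t) s =
          (Real.cos (m * (T - s - -t)) + Real.sin (m * (T + s - -t))) / (2 * Real.sin (m * T)) := by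
        rw [Gbar, if_pos ⟨by linarith, by linarith⟩]
      have hev : (fun τ => Gbar T m τ s) =ᶠ[nhds t]
          (fun τ => (Real.cos (m * (T + s + τ)) - Real.sin (m * (T - s + τ))) / (2 * Real.sin (m * T))) := by
        filter_upwards [eventually_lt_nhds h4] with τ hτ
        have hτs : -|s| ≤ s := neg_abs_le s
        have hτs' : -|s| ≤ -s := by rcases abs_cases s with ⟨hs,_⟩|⟨hs,_⟩ <;> linarith
        have hτ0 : τ < 0 := by linarith [abs_nonneg s]
        have habs : -|τ| = τ := by rw [abs_of_neg hτ0]; ring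
        have hA : ¬(-τ ≤ s ∧ s < τ) := by
          rintro ⟨hc, _⟩; linarith [le_abs_self s]
        have hB : ¬(-s ≤ τ ∧ τ < s) := by
          rintro ⟨hc, _⟩; linarith [le_abs_self s]
        have hC : ¬(s < -|τ|) := by
          rw [habs]; intro hc; linarith [neg_abs_le s]
        rw [Gbar, if_neg hA, if_neg hB, if_neg hC, if_pos hτ]
      have hd : HasDerivAt (fun τ => (Real.cos (m * (T + s + τ)) - Real.sin (m * (T - s + τ))) / (2 * Real.sin (m * T)))
          ((-(Real.sin (m * (T + s + t)) * m) - Real.cos (m * (T - s + t)) * m) / (2 * Real.sin (m * T))) t :=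
        ((hd_cos_add m (T + s) t).sub (hd_sin_add m (T - s) t)).div_const _
      have := hd.congr_of_eventuallyEq hev
      refine this.congr_deriv ?_
      rw [hg]
      ring_nf
    · -- 0 ≤ t : region 1, -t ≤ s < t  (in fact |s| < t so t > 0)
      rw [abs_of_nonneg ht] at h1 h2
      have hg : Gbar T m (-t) s =
          (Real.cos (m * (T + s + -t)) - Real.sin (m * (T - s + -t))) / (2 * Real.sin (m * T)) := by
        have h4 : -t < -|s| := by
          rcases abs_cases s with ⟨hs,_⟩|⟨hs,_⟩ <;> (rw [hs]; linarith)
        have ht0 : 0 < t := lt_of_le_of_lt (abs_nonneg s) (by rcases abs_cases s with ⟨hs,_⟩|⟨hs,_⟩ <;> linarith)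
        have hA : ¬(-(-t) ≤ s ∧ s < -t) := by
          rintro ⟨hc, _⟩; simp only [neg_neg] at hc; linarith [neg_abs_le s]
        have hB : ¬(-s ≤ -t ∧ -t < s) := by
          rintro ⟨hc, _⟩; linarith [le_abs_self s]
        have hC : ¬(s < -|-t|) := by
          rw [abs_neg, abs_of_pos ht0]
          intro hc; linarith [neg_abs_le s]
        rw [Gbar, if_neg hA, if_neg hB, if_neg hC, if_pos h4]
      have hev : (fun τ => Gbar T m τ s) =ᶠ[nhds t]
          (fun τ => (Real.cos (m * (T - s - τ)) + Real.sin (m * (T + s - τ))) / (2 * Real.sin (m * T))) := by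
        filter_upwards [eventually_gt_nhds h2, eventually_gt_nhds (show -s < t by linarith)] with τ hτ1 hτ2
        rw [Gbar, if_pos ⟨by linarith, hτ1⟩]
      have hd : HasDerivAt (fun τ => (Real.cos (m * (T - s - τ)) + Real.sin (m * (T + s - τ))) / (2 * Real.sin (m * T)))
          ((Real.sin (m * (T - s - t)) * m + -(Real.cos (m * (T + s - t)) * m)) / (2 * Real.sin (m * T))) t :=
        ((hd_cos_sub m (T - s) t).add (hd_sin_sub m (T + s) t)).div_const _
      have := hd.congr_of_eventuallyEq hev
      refine this.congr_deriv ?_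
      rw [hg]
      ring_nf
  · -- |t| < |s|
    rcases abs_lt.mp h with ⟨h1, h2⟩  -- -|s| < t ∧ t < |s|
    rcases lt_or_ge s 0 with hs | hs
    · -- s < 0 : region 3, s < -|t|
      rw [abs_of_neg hs] at h1 h2
      have hg : Gbar T m (-t) s =
          (Real.cos (m * (T + s + -t)) + Real.sin (m * (T + s - -t))) / (2 * Real.sin (m * T)) := by
        have h3 : s < -|-t| := by
          rw [abs_neg]
          rcases abs_cases t with ⟨h,_⟩|⟨h,_⟩ <;> linarith
        have hA : ¬(-(-t) ≤ s ∧ s < -t) := by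
          rintro ⟨hc, _⟩; simp only [neg_neg] at hc
          linarith [le_abs_self t]
        have hB : ¬(-s ≤ -t ∧ -t < s) := by
          rintro ⟨_, hc⟩; linarith [neg_abs_le t]
        rw [Gbar, if_neg hA, if_neg hB, if_pos h3]
      have hev : (fun τ => Gbar T m τ s) =ᶠ[nhds t]
          (fun τ => (Real.cos (m * (T + s + τ)) + Real.sin (m * (T + s - τ))) / (2 * Real.sin (m * T))) := by
        filter_upwards [eventually_gt_nhds h1, eventually_lt_nhds h2] with τ hτ1 hτ2
        have h3 : s < -|τ| := by
          rcases abs_cases τ with ⟨h,_⟩|⟨h,_⟩ <;> linarith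
        have hA : ¬(-τ ≤ s ∧ s < τ) := by
          rintro ⟨hc, _⟩; linarith [le_abs_self τ, neg_abs_le τ]
        have hB : ¬(-s ≤ τ ∧ τ < s) := by
          rintro ⟨_, hc⟩; linarith
        rw [Gbar, if_neg hA, if_neg hB, if_pos h3]
      have hd : HasDerivAt (fun τ => (Real.cos (m * (T + s + τ)) + Real.sin (m * (T + s - τ))) / (2 * Real.sin (m * T)))
          ((-(Real.sin (m * (T + s + t)) * m) + -(Real.cos (m * (T + s - t)) * m)) / (2 * Real.sin (m * T))) t :=
        ((hd_cos_add m (T + s) t).add (hd_sin_sub m (T + s) t)).div_const _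
      have := hd.congr_of_eventuallyEq hev
      refine this.congr_deriv ?_
      rw [hg]
      ring_nf
    · -- 0 ≤ s : region 2, -s ≤ t < s
      rw [abs_of_nonneg hs] at h1 h2
      have hg : Gbar T m (-t) s =
          (Real.cos (m * (T - s - -t)) - Real.sin (m * (T - s + -t))) / (2 * Real.sin (m * T)) := by
        have hA : ¬(-(-t) ≤ s ∧ s < -t) := by
          rintro ⟨hc, hc2⟩; linarith
        rw [Gbar, if_neg hA, if_pos ⟨by linarith, by linarith⟩]
      have hev : (fun τ => Gbar T m τ s) =ᶠ[nhds t]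
          (fun τ => (Real.cos (m * (T - s - τ)) - Real.sin (m * (T - s + τ))) / (2 * Real.sin (m * T))) := by
        filter_upwards [eventually_gt_nhds h1, eventually_lt_nhds h2] with τ hτ1 hτ2
        have hA : ¬(-τ ≤ s ∧ s < τ) := by
          rintro ⟨hc, hc2⟩; linarith
        rw [Gbar, if_neg hA, if_pos ⟨by linarith, hτ2⟩]
      have hd : HasDerivAt (fun τ => (Real.cos (m * (T - s - τ)) - Real.sin (m * (T - s + τ))) / (2 * Real.sin (m * T)))
          ((Real.sin (m * (T - s - t)) * m - Real.cos (m * (T - s + t)) * m) / (2 * Real.sin (m * T))) t :=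
        ((hd_cos_sub m (T - s) t).sub (hd_sin_add m (T - s) t)).div_const _
      have := hd.congr_of_eventuallyEq hev
      refine this.congr_deriv ?_
      rw [hg]
      ring_nf
end

section
/- If m ∈ ℝ satisfies mT ∉ πℤ and |mT| > π/4, then Ḡ_m changes sign on I²: there exist (t₁,s₁) ∈ I² and (t₂,s₂) ∈ I² such that Ḡ_m(t₁,s₁) > 0 and Ḡ_m(t₂,s₂) < 0. -/
/-- If `mT ∉ πℤ` and `|mT| > π/4`, then `Ḡ_m` changes sign on
`I² = [−T,T]²`. -/
theorem stmt_14 (T m : ℝ) (hT : 0 < T)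
    (hres : ∀ k : ℤ, m * T ≠ k * Real.pi)
    (hbig : Real.pi / 4 < |m * T|) :
    (∃ t₁ ∈ Set.Icc (-T) T, ∃ s₁ ∈ Set.Icc (-T) T, 0 < Gbar T m t₁ s₁) ∧
    (∃ t₂ ∈ Set.Icc (-T) T, ∃ s₂ ∈ Set.Icc (-T) T, Gbar T m t₂ s₂ < 0) := by
  have hπ := Real.pi_pos
  have hSne : Real.sin (m * T) ≠ 0 := by
    intro h
    rcases Real.sin_eq_zero_iff.mp h with ⟨k, hk⟩
    exact hres k hk.symm
  set a := |m * T| with ha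
  have hapos : 0 < a := lt_trans (by positivity) hbig
  have hmne : m ≠ 0 := by
    intro h; rw [h] at ha; simp at ha; rw [ha] at hapos; exact lt_irrefl 0 hapos
  have habsm : 0 < |m| := abs_pos.mpr hmne
  have haeq : a = |m| * T := by rw [ha, abs_mul, abs_of_pos hT]
  set v := max (-(3 * Real.pi / 4)) (-((a + Real.pi / 4) / 2)) with hv
  have hv1 : -(3 * Real.pi / 4) ≤ v := le_max_left _ _
  have hv2 : v < -(Real.pi / 4) := by
    apply max_lt
    · nlinarith
    · nlinarith
  have hv3 : -a < v := lt_of_lt_of_le (by nlinarith) (le_max_right _ _)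
  have hvlt : v < a := by nlinarith
  set s := v / m with hs
  have hms : m * s = v := by rw [hs]; field_simp
  have hsabs : |s| < T := by
    have h1 : |v| < a := abs_lt.mpr ⟨hv3, hvlt⟩
    have h2 : |s| = |v| / |m| := by rw [hs, abs_div]
    rw [h2, div_lt_iff₀ habsm]
    calc |v| < a := h1
      _ = T * |m| := by rw [haeq]; ring
  have hsl : -T ≤ s := by
    have := (abs_lt.mp hsabs).1; linarith
  have hsu : s < T := (abs_lt.mp hsabs).2
  -- value at (T, 0)
  have hG1 : Gbar T m T 0 = 1 / (2 * Real.sin (m * T)) := by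
    rw [Gbar, if_pos ⟨by linarith, hT⟩]
    have e1 : m * (T - 0 - T) = 0 := by ring
    have e2 : m * (T + 0 - T) = 0 := by ring
    rw [e1, e2, Real.cos_zero, Real.sin_zero]
    norm_num
  -- value at (T, s)
  have hG2 : Gbar T m T s = (Real.cos v + Real.sin v) / (2 * Real.sin (m * T)) := by
    rw [Gbar, if_pos ⟨hsl, hsu⟩]
    have e1 : m * (T - s - T) = -(m * s) := by ring
    have e2 : m * (T + s - T) = m * s := by ring
    rw [e1, e2, hms, Real.cos_neg]
  -- the numerator at (T,s) is negative
  have hnum : Real.cos v + Real.sin v < 0 := by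
    have harg1 : -Real.pi < v + Real.pi / 4 := by nlinarith
    have harg2 : v + Real.pi / 4 < 0 := by linarith
    have hsinneg : Real.sin (v + Real.pi / 4) < 0 :=
      Real.sin_neg_of_neg_of_neg_pi_lt harg2 harg1
    have hid : Real.cos v + Real.sin v = Real.sqrt 2 * Real.sin (v + Real.pi / 4) := by
      rw [Real.sin_add, Real.sin_pi_div_four, Real.cos_pi_div_four]
      have h2 : Real.sqrt 2 * Real.sqrt 2 = 2 := Real.mul_self_sqrt (by norm_num)
      have h3 : Real.sqrt 2 * (Real.sin v * (Real.sqrt 2 / 2) + Real.cos v * (Real.sqrt 2 / 2))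
          = (Real.sqrt 2 * Real.sqrt 2) / 2 * (Real.sin v + Real.cos v) := by ring
      rw [h3, h2]; ring
    rw [hid]
    have : 0 < Real.sqrt 2 := by positivity
    nlinarith
  have hTmem : T ∈ Set.Icc (-T) T := ⟨by linarith, le_refl T⟩
  have h0mem : (0 : ℝ) ∈ Set.Icc (-T) T := ⟨by linarith, le_of_lt hT⟩
  have hsmem : s ∈ Set.Icc (-T) T := ⟨hsl, le_of_lt hsu⟩
  rcases hSne.lt_or_gt with hS | hS
  · -- sin(mT) < 0
    constructor
    · exact ⟨T, hTmem, s, hsmem, by rw [hG2]; exact div_pos_of_neg_of_neg hnum (by linarith)⟩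
    · exact ⟨T, hTmem, 0, h0mem, by rw [hG1]; exact div_neg_of_pos_of_neg one_pos (by linarith)⟩
  · -- sin(mT) > 0
    constructor
    · exact ⟨T, hTmem, 0, h0mem, by rw [hG1]; exact div_pos one_pos (by linarith)⟩
    · exact ⟨T, hTmem, s, hsmem, by rw [hG2]; exact div_neg_of_neg_of_pos hnum (by linarith)⟩
end

section
/- Let T > 0 and I = [−T,T]. Let x : I → ℝ be absolutely continuous with x(−T) − x(T) ≥ 0 and suppose x'(t) + m·x(−t) > 0 for almost every t ∈ I. Then: (1) if m ∈ (0, π/(4T)], then x(t) > 0 for all t ∈ I; (2) if m ∈ [−π/(4T), 0), then x(t) < 0 for all t ∈ I. -/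
open MeasureTheory Set intervalIntegral

lemma my_fubini_triangle (a b : ℝ) (hab : a ≤ b) (f φ φ' : ℝ → ℝ)
    (hf : IntegrableOn f (Set.Icc a b))
    (hφ : ∀ t, HasDerivAt φ (φ' t) t) (hφ' : Continuous φ') :
    ∫ s in a..b, (∫ r in a..s, f r) * φ' s = ∫ r in a..b, f r * (φ b - φ r) := by
  set μ := volume.restrict (Set.Ioc a b) with hμ
  have hfi : IntegrableOn f (Set.Ioc a b) := hf.mono_set Set.Ioc_subset_Icc_self
  obtain ⟨C, hC⟩ := isCompact_Icc.exists_bound_of_continuousOn hφ'.continuousOn (f := φ')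
  set K : ℝ × ℝ → ℝ := ({q : ℝ × ℝ | q.2 ≤ q.1}).indicator (fun q => f q.2 * φ' q.1) with hK
  have hKm : AEStronglyMeasurable K (μ.prod μ) := by
    refine AEStronglyMeasurable.indicator ?_ (measurableSet_le measurable_snd measurable_fst)
    exact (hfi.aestronglyMeasurable.comp_snd).mul
      ((hφ'.comp continuous_fst).aestronglyMeasurable)
  have hae1 : ∀ᵐ p ∂μ.prod μ, p.1 ∈ Set.Ioc a b := by
    rw [ae_iff]
    have he : {p : ℝ × ℝ | ¬ p.1 ∈ Set.Ioc a b} = (Set.Ioc a b)ᶜ ×ˢ (Set.univ : Set ℝ) := by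
      ext p; simp [Set.mem_prod]
    rw [he, Measure.prod_prod, hμ, Measure.restrict_apply' measurableSet_Ioc]
    simp
  have hKi : Integrable K (μ.prod μ) := by
    refine Integrable.mono' (g := fun p => |C| * |f p.2|) ?_ hKm ?_
    · have h1 : Integrable (fun _ : ℝ => |C|) μ := integrable_const _
      have h2 : Integrable (fun r : ℝ => |f r|) μ := hfi.abs
      exact h1.mul_prod h2
    · filter_upwards [hae1] with p hp
      have hb := hC p.1 (Set.Ioc_subset_Icc_self hp)
      rw [Real.norm_eq_abs] at hb
      rcases le_or_gt p.2 p.1 with h | h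
      · have hKp : K p = f p.2 * φ' p.1 := Set.indicator_of_mem (show p ∈ {q : ℝ × ℝ | q.2 ≤ q.1} from h) _
        rw [hKp, Real.norm_eq_abs, abs_mul]
        nlinarith [abs_nonneg (f p.2), abs_nonneg (φ' p.1), le_abs_self C]
      · have hKp : K p = 0 := Set.indicator_of_notMem (by simpa using not_le.mpr h) _
        rw [hKp]
        simp only [norm_zero]
        positivity
  have hswap := integral_integral_swap (f := fun s r => K (s, r)) (μ := μ) (ν := μ) (by exact hKi)
  have hL : ∀ s ∈ Set.Ioc a b, (∫ r, K (s, r) ∂μ) = (∫ r in a..s, f r) * φ' s := by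
    intro s hs
    have h1 : (fun r => K (s, r)) = (Set.Iic s).indicator (fun r => f r * φ' s) := by
      ext r; simp only [hK, Set.indicator_apply, Set.mem_setOf_eq, Set.mem_Iic]
    rw [h1, MeasureTheory.integral_indicator measurableSet_Iic, hμ, Measure.restrict_restrict measurableSet_Iic]
    have h2 : Set.Iic s ∩ Set.Ioc a b = Set.Ioc a s := by
      ext r; simp only [Set.mem_inter_iff, Set.mem_Iic, Set.mem_Ioc]
      constructor
      · rintro ⟨h1, h2, h3⟩; exact ⟨h2, h1⟩
      · rintro ⟨h1', h2'⟩; exact ⟨h2', h1', h2'.trans hs.2⟩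
    rw [h2, MeasureTheory.integral_mul_const, intervalIntegral.integral_of_le hs.1.le]
  have hR : ∀ r ∈ Set.Ioc a b, (∫ s, K (s, r) ∂μ) = f r * (φ b - φ r) := by
    intro r hr
    have h1 : (fun s => K (s, r)) = (Set.Ici r).indicator (fun s => f r * φ' s) := by
      ext s; simp only [hK, Set.indicator_apply, Set.mem_setOf_eq, Set.mem_Ici]
    rw [h1, MeasureTheory.integral_indicator measurableSet_Ici, hμ,
      Measure.restrict_restrict measurableSet_Ici]
    have h2 : Set.Ici r ∩ Set.Ioc a b = Set.Icc r b := by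
      ext s; simp only [Set.mem_inter_iff, Set.mem_Ici, Set.mem_Ioc, Set.mem_Icc]
      constructor
      · rintro ⟨u1, _, u3⟩; exact ⟨u1, u3⟩
      · rintro ⟨u1, u2⟩; exact ⟨u1, hr.1.trans_le u1, u2⟩
    rw [h2, integral_Icc_eq_integral_Ioc, ← intervalIntegral.integral_of_le hr.2,
      intervalIntegral.integral_const_mul,
      intervalIntegral.integral_eq_sub_of_hasDerivAt (fun t _ => hφ t)
        (hφ'.intervalIntegrable r b)]
  calc ∫ s in a..b, (∫ r in a..s, f r) * φ' s
      = ∫ s, (∫ r in a..s, f r) * φ' s ∂μ := by rw [intervalIntegral.integral_of_le hab]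
    _ = ∫ s, (∫ r, K (s, r) ∂μ) ∂μ :=
        setIntegral_congr_fun measurableSet_Ioc (fun s hs => (hL s hs).symm)
    _ = ∫ r, (∫ s, K (s, r) ∂μ) ∂μ := hswap
    _ = ∫ r, f r * (φ b - φ r) ∂μ :=
        setIntegral_congr_fun measurableSet_Ioc (fun r hr => hR r hr)
    _ = ∫ r in a..b, f r * (φ b - φ r) := by rw [intervalIntegral.integral_of_le hab]

lemma my_parts (a b c : ℝ) (hab : a ≤ b) (f φ φ' : ℝ → ℝ)
    (hf : IntegrableOn f (Set.Icc a b))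
    (hφ : ∀ t, HasDerivAt φ (φ' t) t) (hφ' : Continuous φ') :
    ∫ s in a..b, (f s * φ s + (c + ∫ r in a..s, f r) * φ' s)
      = (c + ∫ r in a..b, f r) * φ b - c * φ a := by
  have hfuIcc : IntegrableOn f (Set.uIcc a b) := by rwa [Set.uIcc_of_le hab]
  have hφc : Continuous φ := by
    rw [continuous_iff_continuousAt]; exact fun t => (hφ t).continuousAt
  have i1 : IntervalIntegrable (fun s => f s * φ s) volume a b :=
    (hfuIcc.mul_continuousOn hφc.continuousOn isCompact_uIcc).intervalIntegrable
  have i2 : IntervalIntegrable (fun s => (c + ∫ r in a..s, f r) * φ' s) volume a b :=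
    (((continuousOn_const.add (continuousOn_primitive_interval hfuIcc)).mul
      hφ'.continuousOn)).intervalIntegrable
  rw [intervalIntegral.integral_add i1 i2]
  have e2 : ∫ s in a..b, (c + ∫ r in a..s, f r) * φ' s
      = c * (φ b - φ a) + ∫ r in a..b, f r * (φ b - φ r) := by
    have i3 : IntervalIntegrable (fun s => c * φ' s) volume a b :=
      ((continuous_const.mul hφ').intervalIntegrable a b)
    have i4 : IntervalIntegrable (fun s => (∫ r in a..s, f r) * φ' s) volume a b :=
      ((continuousOn_primitive_interval hfuIcc).mul hφ'.continuousOn).intervalIntegrable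
    have hsplit : (fun s => (c + ∫ r in a..s, f r) * φ' s)
        = fun s => c * φ' s + (∫ r in a..s, f r) * φ' s := by ext s; ring
    rw [hsplit, intervalIntegral.integral_add i3 i4, intervalIntegral.integral_const_mul,
      intervalIntegral.integral_eq_sub_of_hasDerivAt (fun t _ => hφ t) (hφ'.intervalIntegrable a b),
      my_fubini_triangle a b hab f φ φ' hf hφ hφ']
  rw [e2]
  have i5 : IntervalIntegrable (fun r => f r * (φ b - φ r)) volume a b :=
    (hfuIcc.mul_continuousOn ((continuous_const.sub hφc).continuousOn) isCompact_uIcc).intervalIntegrable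
  have e3 : (∫ s in a..b, f s * φ s) + ∫ r in a..b, f r * (φ b - φ r)
      = (∫ r in a..b, f r) * φ b := by
    rw [← intervalIntegral.integral_add i1 i5]
    have : (fun s => f s * φ s + f s * (φ b - φ s)) = fun s => f s * φ b := by ext s; ring
    rw [this, intervalIntegral.integral_mul_const]
  linarith

lemma my_intpos (k : ℝ → ℝ) (c d : ℝ) (hcd : c < d)
    (hki : IntegrableOn k (Set.Icc c d))
    (hk : ∀ᵐ s ∂volume.restrict (Set.Icc c d), 0 < k s) :
    0 < ∫ s in c..d, k s := by
  rw [intervalIntegral.integral_of_le hcd.le]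
  have hki' : IntegrableOn k (Set.Ioc c d) := hki.mono_set Set.Ioc_subset_Icc_self
  have hk' : ∀ᵐ s ∂volume.restrict (Set.Ioc c d), 0 < k s :=
    ae_mono (Measure.restrict_mono Set.Ioc_subset_Icc_self le_rfl) hk
  have hnn : 0 ≤ᵐ[volume.restrict (Set.Ioc c d)] k := hk'.mono fun s hs => hs.le
  rw [MeasureTheory.setIntegral_pos_iff_support_of_nonneg_ae hnn hki']
  have hz : volume ({s | ¬ 0 < k s} ∩ Set.Ioc c d) = 0 := by
    have h0 := ae_iff.mp hk'
    rwa [Measure.restrict_apply' measurableSet_Ioc] at h0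
  have hcover : Set.Ioc c d
      ⊆ (Function.support k ∩ Set.Ioc c d) ∪ ({s | ¬ 0 < k s} ∩ Set.Ioc c d) := by
    intro s hs
    by_cases h : 0 < k s
    · exact Or.inl ⟨h.ne', hs⟩
    · exact Or.inr ⟨h, hs⟩
  have hle := (measure_mono (μ := (volume : Measure ℝ)) hcover).trans (measure_union_le _ _)
  rw [hz, add_zero] at hle
  refine lt_of_lt_of_le ?_ hle
  rw [Real.volume_Ioc]
  exact ENNReal.ofReal_pos.mpr (by linarith)

lemma my_ae_neg {c : ℝ} {P : ℝ → Prop}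
    (h : ∀ᵐ t ∂volume.restrict (Set.Icc (-c) c), P t) :
    ∀ᵐ t ∂volume.restrict (Set.Icc (-c) c), P (-t) := by
  rw [ae_restrict_iff' measurableSet_Icc] at h ⊢
  rw [ae_iff] at h ⊢
  have hBA : {t : ℝ | ¬(t ∈ Set.Icc (-c) c → P (-t))}
      = Neg.neg ⁻¹' {t : ℝ | ¬(t ∈ Set.Icc (-c) c → P t)} := by
    ext t
    simp only [Set.mem_setOf_eq, Set.mem_preimage, Classical.not_imp, Set.mem_Icc]
    constructor
    · rintro ⟨⟨h1, h2⟩, h3⟩; exact ⟨⟨by linarith, by linarith⟩, h3⟩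
    · rintro ⟨⟨h1, h2⟩, h3⟩; exact ⟨⟨by linarith, by linarith⟩, h3⟩
  rw [hBA]
  rw [(Measure.measurePreserving_neg (volume : Measure ℝ)).measure_preimage
    (NullMeasurableSet.of_null h)]
  exact h

lemma my_int_neg {f : ℝ → ℝ} {c : ℝ} (hc : 0 ≤ c) (hf : IntegrableOn f (Set.Icc (-c) c)) :
    IntegrableOn (fun s => f (-s)) (Set.Icc (-c) c) := by
  have h1 : IntervalIntegrable f volume (-c) c := by
    rw [intervalIntegrable_iff_integrableOn_Icc_of_le (by linarith)]; exact hf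
  have h2 := ((IntervalIntegrable.iff_comp_neg (by simp)).mp h1).symm
  rw [show -(-c) = c from neg_neg c] at h2
  rwa [intervalIntegrable_iff_integrableOn_Icc_of_le (by linarith : -c ≤ c)] at h2

lemma my_comb (a b c1 c2 : ℝ) (f1 f2 : ℝ → ℝ)
    (h1 : IntervalIntegrable f1 volume a b) (h2 : IntervalIntegrable f2 volume a b) :
    ∫ s in a..b, (c1 * f1 s + c2 * f2 s)
      = c1 * (∫ s in a..b, f1 s) + c2 * ∫ s in a..b, f2 s := by
  rw [intervalIntegral.integral_add (h1.const_mul c1) (h2.const_mul c2),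
    intervalIntegral.integral_const_mul, intervalIntegral.integral_const_mul]

set_option maxHeartbeats 2000000 in
lemma my_main (T m : ℝ) (hT : 0 < T) (hm : 0 < m) (hmT : m * T ≤ Real.pi / 4)
    (x g : ℝ → ℝ) (hg : IntegrableOn g (Set.Icc (-T) T))
    (hrepr : ∀ t ∈ Set.Icc (-T) T, x t = x (-T) + ∫ s in (-T)..t, g s)
    (hbc : 0 ≤ x (-T) - x T)
    (hpos : ∀ᵐ t ∂(volume.restrict (Set.Icc (-T) T)), 0 < g t + m * x (-t)) :
    ∀ t ∈ Set.Icc (-T) T, 0 < x t := by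
  have hπ := Real.pi_pos
  have hT2 : -T ≤ T := by linarith
  -- trig facts
  have htrig : ∀ θ : ℝ, 0 ≤ θ → θ ≤ m * T →
      0 < Real.cos θ ∧ 0 ≤ Real.sin θ ∧ Real.sin θ ≤ Real.cos θ := by
    intro θ h0 h1
    have hθ4 : θ ≤ Real.pi / 4 := h1.trans hmT
    refine ⟨Real.cos_pos_of_mem_Ioo ⟨by linarith, by linarith⟩,
      Real.sin_nonneg_of_nonneg_of_le_pi h0 (by linarith), ?_⟩
    have hcos : 0 ≤ Real.cos (θ + Real.pi / 4) :=
      Real.cos_nonneg_of_mem_Icc ⟨by linarith, by linarith⟩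
    have hadd := Real.cos_add θ (Real.pi / 4)
    rw [Real.cos_pi_div_four, Real.sin_pi_div_four] at hadd
    nlinarith [Real.sqrt_pos.mpr (show (0:ℝ) < 2 by norm_num), hcos, hadd]
  -- interval integrability of g on subintervals
  have hsubIoc : ∀ a b : ℝ, a ∈ Set.Icc (-T) T → b ∈ Set.Icc (-T) T →
      Set.uIoc a b ⊆ Set.Icc (-T) T := by
    intro a b ha hb s hs
    rcases Set.mem_uIoc.mp hs with ⟨h1, h2⟩ | ⟨h1, h2⟩
    · exact ⟨by linarith [ha.1], by linarith [hb.2]⟩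
    · exact ⟨by linarith [hb.1], by linarith [ha.2]⟩
  have hgiv : ∀ a b : ℝ, a ∈ Set.Icc (-T) T → b ∈ Set.Icc (-T) T →
      IntervalIntegrable g volume a b := by
    intro a b ha hb
    rw [intervalIntegrable_iff]
    exact hg.mono_set (hsubIoc a b ha hb)
  -- representation between any two points
  have hrep2 : ∀ a b : ℝ, a ∈ Set.Icc (-T) T → b ∈ Set.Icc (-T) T →
      x b = x a + ∫ s in a..b, g s := by
    intro a b ha hb
    have h1 := hrepr a ha
    have h2 := hrepr b hb
    have h3 := intervalIntegral.integral_interval_sub_left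
      (hgiv (-T) b (Set.left_mem_Icc.mpr hT2) hb) (hgiv (-T) a (Set.left_mem_Icc.mpr hT2) ha)
    linarith [h3]
  have hmemneg : ∀ a : ℝ, a ∈ Set.Icc 0 T → (-a) ∈ Set.Icc (-T) T := by
    intro a ha; exact ⟨by linarith [ha.2], by linarith [ha.1]⟩
  have hmem' : ∀ a : ℝ, a ∈ Set.Icc 0 T → a ∈ Set.Icc (-T) T := by
    intro a ha; exact ⟨by linarith [ha.1], by linarith [ha.2]⟩
  have hxnegrep : ∀ a b : ℝ, a ∈ Set.Icc 0 T → b ∈ Set.Icc 0 T →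
      x (-b) = x (-a) + ∫ s in a..b, -g (-s) := by
    intro a b ha hb
    have h1 := hrep2 (-a) (-b) (hmemneg a ha) (hmemneg b hb)
    have h2 : ∫ s in a..b, -g (-s) = ∫ s in (-a)..(-b), g s := by
      rw [intervalIntegral.integral_neg, intervalIntegral.integral_comp_neg,
        ← intervalIntegral.integral_symm]
    linarith [h1, h2]
  -- integrability of x and x∘neg
  have hguIcc : IntegrableOn g (Set.uIcc (-T) T) := by rwa [Set.uIcc_of_le hT2]
  have hx_int : IntegrableOn x (Set.Icc (-T) T) := by
    have hcont : ContinuousOn (fun t : ℝ => x (-T) + ∫ s in (-T)..t, g s) (Set.Icc (-T) T) := by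
      rw [← Set.uIcc_of_le hT2]
      exact continuousOn_const.add (continuousOn_primitive_interval hguIcc)
    exact (hcont.integrableOn_compact isCompact_Icc).congr_fun
      (fun t ht => (hrepr t ht).symm) measurableSet_Icc
  have hxneg_int : IntegrableOn (fun s => x (-s)) (Set.Icc (-T) T) := my_int_neg hT.le hx_int
  have hgneg_int : IntegrableOn (fun s => g (-s)) (Set.Icc (-T) T) := my_int_neg hT.le hg
  -- k₁, k₂ integrable
  have hk1_int : IntegrableOn (fun s => g (-s) + m * x s) (Set.Icc (-T) T) :=
    hgneg_int.add (hx_int.const_mul m)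
  have hk2_int : IntegrableOn (fun s => g s + m * x (-s)) (Set.Icc (-T) T) :=
    hg.add (hxneg_int.const_mul m)
  -- reflected positivity
  have hposneg : ∀ᵐ t ∂(volume.restrict (Set.Icc (-T) T)), 0 < g (-t) + m * x t := by
    filter_upwards [my_ae_neg (c := T) hpos] with t ht
    rwa [neg_neg] at ht
  -- interval integrability helper
  have hII : ∀ (k : ℝ → ℝ), IntegrableOn k (Set.Icc (-T) T) → ∀ (ψ : ℝ → ℝ), Continuous ψ →
      ∀ a b : ℝ, a ∈ Set.Icc (-T) T → b ∈ Set.Icc (-T) T →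
      IntervalIntegrable (fun s => k s * ψ s) volume a b := by
    intro k hk ψ hψ a b ha hb
    rw [intervalIntegrable_iff]
    exact IntegrableOn.mul_continuousOn_of_subset (hk.mono_set (hsubIoc a b ha hb))
      hψ.continuousOn measurableSet_uIoc isCompact_Icc (hsubIoc a b ha hb)
  -- derivatives
  have hlin : ∀ t : ℝ, HasDerivAt (fun t : ℝ => m * t) m t := by
    intro t; simpa using (hasDerivAt_id t).const_mul m
  have hcosd : ∀ t : ℝ, HasDerivAt (fun t => Real.cos (m * t)) (-(m * Real.sin (m * t))) t := by
    intro t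
    have := (Real.hasDerivAt_cos (m * t)).comp t (hlin t)
    simpa [mul_comm, Function.comp_def] using this
  have hsind : ∀ t : ℝ, HasDerivAt (fun t => Real.sin (m * t)) (m * Real.cos (m * t)) t := by
    intro t
    have := (Real.hasDerivAt_sin (m * t)).comp t (hlin t)
    simpa [mul_comm, Function.comp_def] using this
  have hcosc : Continuous fun t : ℝ => Real.cos (m * t) := by fun_prop
  have hsinc : Continuous fun t : ℝ => Real.sin (m * t) := by fun_prop
  have hncosd : Continuous fun t : ℝ => -(m * Real.sin (m * t)) := by fun_prop
  have hnsind : Continuous fun t : ℝ => m * Real.cos (m * t) := by fun_prop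
  -- generic identities
  have haveU : ∀ a b : ℝ, 0 ≤ a → a ≤ b → b ≤ T → ∀ φ φ' : ℝ → ℝ,
      (∀ t, HasDerivAt φ (φ' t) t) → Continuous φ' →
      x b * φ b - x a * φ a = ∫ s in a..b, (g s * φ s + x s * φ' s) := by
    intro a b h0 hab hbT φ φ' hd hc
    have haI : a ∈ Set.Icc (-T) T := ⟨by linarith, by linarith⟩
    have hbI : b ∈ Set.Icc (-T) T := ⟨by linarith, by linarith⟩
    have hfI : IntegrableOn g (Set.Icc a b) :=
      hg.mono_set (fun s hs => ⟨by linarith [hs.1], by linarith [hs.2]⟩)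
    have p := my_parts a b (x a) hab g φ φ' hfI hd hc
    rw [← hrep2 a b haI hbI] at p
    have e : ∫ s in a..b, (g s * φ s + (x a + ∫ r in a..s, g r) * φ' s)
        = ∫ s in a..b, (g s * φ s + x s * φ' s) := by
      apply intervalIntegral.integral_congr
      intro s hs
      rw [Set.uIcc_of_le hab] at hs
      show g s * φ s + (x a + ∫ r in a..s, g r) * φ' s = g s * φ s + x s * φ' s
      rw [← hrep2 a s haI ⟨by linarith [hs.1], by linarith [hs.2]⟩]
    rw [e] at p
    exact p.symm
  have haveV : ∀ a b : ℝ, 0 ≤ a → a ≤ b → b ≤ T → ∀ φ φ' : ℝ → ℝ,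
      (∀ t, HasDerivAt φ (φ' t) t) → Continuous φ' →
      x (-b) * φ b - x (-a) * φ a = ∫ s in a..b, (-g (-s) * φ s + x (-s) * φ' s) := by
    intro a b h0 hab hbT φ φ' hd hc
    have haI : a ∈ Set.Icc 0 T := ⟨h0, by linarith⟩
    have hbI : b ∈ Set.Icc 0 T := ⟨by linarith, hbT⟩
    have hgnn : IntegrableOn (fun s => -g (-s)) (Set.Icc (-T) T) := hgneg_int.neg
    have hfI : IntegrableOn (fun s => -g (-s)) (Set.Icc a b) :=
      hgnn.mono_set (fun s hs => ⟨by linarith [hs.1], by linarith [hs.2]⟩)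
    have p := my_parts a b (x (-a)) hab (fun s => -g (-s)) φ φ' hfI hd hc
    rw [← hxnegrep a b haI hbI] at p
    have e : ∫ s in a..b, (-g (-s) * φ s + (x (-a) + ∫ r in a..s, -g (-r)) * φ' s)
        = ∫ s in a..b, (-g (-s) * φ s + x (-s) * φ' s) := by
      apply intervalIntegral.integral_congr
      intro s hs
      rw [Set.uIcc_of_le hab] at hs
      show -g (-s) * φ s + (x (-a) + ∫ r in a..s, -g (-r)) * φ' s
          = -g (-s) * φ s + x (-s) * φ' s
      rw [← hxnegrep a s haI ⟨by linarith [hs.1], by linarith [hs.2]⟩]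
    rw [e] at p
    exact p.symm
  have hgnn : IntegrableOn (fun s => -g (-s)) (Set.Icc (-T) T) := hgneg_int.neg
  have keyQ : ∀ a b : ℝ, 0 ≤ a → a ≤ b → b ≤ T →
      x (-b) * Real.cos (m*b) - x b * Real.sin (m*b)
        = (x (-a) * Real.cos (m*a) - x a * Real.sin (m*a))
          - ∫ s in a..b, ((g (-s) + m * x s) * Real.cos (m*s)
              + (g s + m * x (-s)) * Real.sin (m*s)) := by
    intro a b h0 hab hbT
    have haI : a ∈ Set.Icc (-T) T := ⟨by linarith, by linarith⟩
    have hbI : b ∈ Set.Icc (-T) T := ⟨by linarith, by linarith⟩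
    have hV : x (-b) * Real.cos (m*b) - x (-a) * Real.cos (m*a)
        = ∫ s in a..b, (-g (-s) * Real.cos (m*s) + x (-s) * -(m * Real.sin (m*s))) :=
      haveV a b h0 hab hbT _ _ hcosd hncosd
    have hU : x b * Real.sin (m*b) - x a * Real.sin (m*a)
        = ∫ s in a..b, (g s * Real.sin (m*s) + x s * (m * Real.cos (m*s))) :=
      haveU a b h0 hab hbT _ _ hsind hnsind
    have iV : IntervalIntegrable
        (fun s => -g (-s) * Real.cos (m*s) + x (-s) * -(m * Real.sin (m*s))) volume a b :=
      (hII (fun s => -g (-s)) hgnn (fun t => Real.cos (m*t)) hcosc a b haI hbI).add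
        (hII (fun s => x (-s)) hxneg_int (fun t => -(m * Real.sin (m*t))) hncosd a b haI hbI)
    have iU : IntervalIntegrable
        (fun s => g s * Real.sin (m*s) + x s * (m * Real.cos (m*s))) volume a b :=
      (hII g hg (fun t => Real.sin (m*t)) hsinc a b haI hbI).add
        (hII x hx_int (fun t => m * Real.cos (m*t)) hnsind a b haI hbI)
    have esub : ∫ s in a..b, ((g s * Real.sin (m*s) + x s * (m * Real.cos (m*s)))
          - (-g (-s) * Real.cos (m*s) + x (-s) * -(m * Real.sin (m*s))))
        = (∫ s in a..b, (g s * Real.sin (m*s) + x s * (m * Real.cos (m*s))))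
          - ∫ s in a..b, (-g (-s) * Real.cos (m*s) + x (-s) * -(m * Real.sin (m*s))) :=
      intervalIntegral.integral_sub iU iV
    have ecg : ∫ s in a..b, ((g (-s) + m * x s) * Real.cos (m*s)
          + (g s + m * x (-s)) * Real.sin (m*s))
        = ∫ s in a..b, ((g s * Real.sin (m*s) + x s * (m * Real.cos (m*s)))
          - (-g (-s) * Real.cos (m*s) + x (-s) * -(m * Real.sin (m*s)))) := by
      apply intervalIntegral.integral_congr
      intro s _
      show (g (-s) + m * x s) * Real.cos (m*s) + (g s + m * x (-s)) * Real.sin (m*s)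
          = (g s * Real.sin (m*s) + x s * (m * Real.cos (m*s)))
            - (-g (-s) * Real.cos (m*s) + x (-s) * -(m * Real.sin (m*s)))
      ring
    linarith [hV, hU, esub, ecg]
  have keyP : ∀ a b : ℝ, 0 ≤ a → a ≤ b → b ≤ T →
      x b * Real.cos (m*b) + x (-b) * Real.sin (m*b)
        = (x a * Real.cos (m*a) + x (-a) * Real.sin (m*a))
          + ∫ s in a..b, ((g s + m * x (-s)) * Real.cos (m*s)
              - (g (-s) + m * x s) * Real.sin (m*s)) := by
    intro a b h0 hab hbT
    have haI : a ∈ Set.Icc (-T) T := ⟨by linarith, by linarith⟩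
    have hbI : b ∈ Set.Icc (-T) T := ⟨by linarith, by linarith⟩
    have hU : x b * Real.cos (m*b) - x a * Real.cos (m*a)
        = ∫ s in a..b, (g s * Real.cos (m*s) + x s * -(m * Real.sin (m*s))) :=
      haveU a b h0 hab hbT _ _ hcosd hncosd
    have hV : x (-b) * Real.sin (m*b) - x (-a) * Real.sin (m*a)
        = ∫ s in a..b, (-g (-s) * Real.sin (m*s) + x (-s) * (m * Real.cos (m*s))) :=
      haveV a b h0 hab hbT _ _ hsind hnsind
    have iU : IntervalIntegrable
        (fun s => g s * Real.cos (m*s) + x s * -(m * Real.sin (m*s))) volume a b :=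
      (hII g hg (fun t => Real.cos (m*t)) hcosc a b haI hbI).add
        (hII x hx_int (fun t => -(m * Real.sin (m*t))) hncosd a b haI hbI)
    have iV : IntervalIntegrable
        (fun s => -g (-s) * Real.sin (m*s) + x (-s) * (m * Real.cos (m*s))) volume a b :=
      (hII (fun s => -g (-s)) hgnn (fun t => Real.sin (m*t)) hsinc a b haI hbI).add
        (hII (fun s => x (-s)) hxneg_int (fun t => m * Real.cos (m*t)) hnsind a b haI hbI)
    have esum : ∫ s in a..b, ((g s * Real.cos (m*s) + x s * -(m * Real.sin (m*s)))
          + (-g (-s) * Real.sin (m*s) + x (-s) * (m * Real.cos (m*s))))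
        = (∫ s in a..b, (g s * Real.cos (m*s) + x s * -(m * Real.sin (m*s))))
          + ∫ s in a..b, (-g (-s) * Real.sin (m*s) + x (-s) * (m * Real.cos (m*s))) :=
      intervalIntegral.integral_add iU iV
    have ecg : ∫ s in a..b, ((g s + m * x (-s)) * Real.cos (m*s)
          - (g (-s) + m * x s) * Real.sin (m*s))
        = ∫ s in a..b, ((g s * Real.cos (m*s) + x s * -(m * Real.sin (m*s)))
          + (-g (-s) * Real.sin (m*s) + x (-s) * (m * Real.cos (m*s)))) := by
      apply intervalIntegral.integral_congr
      intro s _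
      show (g s + m * x (-s)) * Real.cos (m*s) - (g (-s) + m * x s) * Real.sin (m*s)
          = (g s * Real.cos (m*s) + x s * -(m * Real.sin (m*s)))
            + (-g (-s) * Real.sin (m*s) + x (-s) * (m * Real.cos (m*s)))
      ring
    linarith [hU, hV, esum, ecg]
  -- ### endgame ###
  have hIccsub : ∀ a b : ℝ, 0 ≤ a → b ≤ T → Set.Icc a b ⊆ Set.Icc (-T) T :=
    fun a b h0 hbT s hs => ⟨by linarith [hs.1], by linarith [hs.2]⟩
  have h0I : (0:ℝ) ∈ Set.Icc (-T) T := ⟨by linarith, hT.le⟩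
  have hTI : T ∈ Set.Icc (-T) T := ⟨hT2, le_rfl⟩
  have hCT := htrig (m*T) (by positivity) le_rfl
  have hST : 0 < Real.sin (m*T) :=
    Real.sin_pos_of_pos_of_lt_pi (by positivity) (by nlinarith)
  -- a.e. positivity on subintervals
  have haepos : ∀ a b : ℝ, 0 ≤ a → b ≤ T →
      ∀ᵐ s ∂volume.restrict (Set.Icc a b),
        (0 < g s + m * x (-s)) ∧ (0 < g (-s) + m * x s) ∧ s ∈ Set.Icc a b := by
    intro a b h0 hbT
    have h1 := ae_restrict_of_ae_restrict_of_subset (hIccsub a b h0 hbT) hpos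
    have h2 := ae_restrict_of_ae_restrict_of_subset (hIccsub a b h0 hbT) hposneg
    filter_upwards [h1, h2, ae_restrict_mem measurableSet_Icc] with s hs1 hs2 hs3
    exact ⟨hs1, hs2, hs3⟩
  -- the Q-integrand and P-integrand interval integrability on [a,b] ⊆ [0,T]
  have iQint : ∀ a b : ℝ, a ∈ Set.Icc (-T) T → b ∈ Set.Icc (-T) T →
      IntervalIntegrable (fun s => (g (-s) + m * x s) * Real.cos (m*s)
        + (g s + m * x (-s)) * Real.sin (m*s)) volume a b := by
    intro a b ha hb
    exact (hII (fun s => g (-s) + m * x s) hk1_int (fun t => Real.cos (m*t)) hcosc a b ha hb).add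
      (hII (fun s => g s + m * x (-s)) hk2_int (fun t => Real.sin (m*t)) hsinc a b ha hb)
  have iPint : ∀ a b : ℝ, a ∈ Set.Icc (-T) T → b ∈ Set.Icc (-T) T →
      IntervalIntegrable (fun s => (g s + m * x (-s)) * Real.cos (m*s)
        - (g (-s) + m * x s) * Real.sin (m*s)) volume a b := by
    intro a b ha hb
    exact (hII (fun s => g s + m * x (-s)) hk2_int (fun t => Real.cos (m*t)) hcosc a b ha hb).sub
      (hII (fun s => g (-s) + m * x s) hk1_int (fun t => Real.sin (m*t)) hsinc a b ha hb)
  -- strict positivity of the Q-integral on [a,b] ⊆ [0,T], a < b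
  have hQintpos : ∀ a b : ℝ, 0 ≤ a → a < b → b ≤ T →
      0 < ∫ s in a..b, ((g (-s) + m * x s) * Real.cos (m*s)
        + (g s + m * x (-s)) * Real.sin (m*s)) := by
    intro a b h0 hab hbT
    apply my_intpos _ a b hab
    · exact (intervalIntegrable_iff_integrableOn_Icc_of_le hab.le).mp
        (iQint a b ⟨by linarith, by linarith⟩ ⟨by linarith, by linarith⟩)
    · filter_upwards [haepos a b h0 hbT] with s ⟨hs2, hs1, hsm⟩
      have hth := htrig (m*s) (by nlinarith [hsm.1]) (by nlinarith [hsm.2])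
      nlinarith [mul_pos hs1 hth.1, mul_nonneg hs2.le hth.2.1]
  -- nonnegativity of the Q-integral
  have hQintnn : ∀ a b : ℝ, 0 ≤ a → a ≤ b → b ≤ T →
      0 ≤ ∫ s in a..b, ((g (-s) + m * x s) * Real.cos (m*s)
        + (g s + m * x (-s)) * Real.sin (m*s)) := by
    intro a b h0 hab hbT
    apply intervalIntegral.integral_nonneg_of_ae_restrict hab
    filter_upwards [haepos a b h0 hbT] with s ⟨hs2, hs1, hsm⟩
    have hth := htrig (m*s) (by nlinarith [hsm.1]) (by nlinarith [hsm.2])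
    show (0:ℝ) ≤ (g (-s) + m * x s) * Real.cos (m*s) + (g s + m * x (-s)) * Real.sin (m*s)
    nlinarith [mul_pos hs1 hth.1, mul_nonneg hs2.le hth.2.1]
  -- base values at 0
  have base1 : x 0 * Real.cos (m*0) + x (-0) * Real.sin (m*0) = x 0 := by
    rw [mul_zero, Real.cos_zero, Real.sin_zero, neg_zero]; ring
  have base2 : x (-0) * Real.cos (m*0) - x 0 * Real.sin (m*0) = x 0 := by
    rw [mul_zero, Real.cos_zero, Real.sin_zero, neg_zero]; ring
  -- Step 1 : 0 < x T
  have hP0T := keyP 0 T le_rfl hT.le le_rfl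
  have hQ0T := keyQ 0 T le_rfl hT.le le_rfl
  rw [base1] at hP0T
  rw [base2] at hQ0T
  have hsumpos : 0 < (∫ s in (0:ℝ)..T, ((g s + m * x (-s)) * Real.cos (m*s)
        - (g (-s) + m * x s) * Real.sin (m*s)))
      + ∫ s in (0:ℝ)..T, ((g (-s) + m * x s) * Real.cos (m*s)
        + (g s + m * x (-s)) * Real.sin (m*s)) := by
    have e0 : ∫ s in (0:ℝ)..T, (((g s + m * x (-s)) * Real.cos (m*s)
          - (g (-s) + m * x s) * Real.sin (m*s))
          + ((g (-s) + m * x s) * Real.cos (m*s)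
          + (g s + m * x (-s)) * Real.sin (m*s)))
        = (∫ s in (0:ℝ)..T, ((g s + m * x (-s)) * Real.cos (m*s)
          - (g (-s) + m * x s) * Real.sin (m*s)))
          + ∫ s in (0:ℝ)..T, ((g (-s) + m * x s) * Real.cos (m*s)
          + (g s + m * x (-s)) * Real.sin (m*s)) :=
      intervalIntegral.integral_add (iPint 0 T h0I hTI) (iQint 0 T h0I hTI)
    rw [← e0]
    apply my_intpos _ 0 T hT
    · exact (intervalIntegrable_iff_integrableOn_Icc_of_le hT.le).mp
        ((iPint 0 T h0I hTI).add (iQint 0 T h0I hTI))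
    · filter_upwards [haepos 0 T le_rfl le_rfl] with s ⟨hs2, hs1, hsm⟩
      have hth := htrig (m*s) (by nlinarith [hsm.1]) (by nlinarith [hsm.2])
      nlinarith [mul_pos hs2 hth.1, mul_nonneg hs1.le (by linarith [hth.2.2] : (0:ℝ) ≤ Real.cos (m*s) - Real.sin (m*s)), mul_nonneg hs2.le hth.2.1]
  have hxT : 0 < x T := by
    have hp1 : 0 ≤ (Real.cos (m*T) - Real.sin (m*T)) * (x (-T) - x T) :=
      mul_nonneg (by linarith [hCT.2.2]) hbc
    nlinarith [hP0T, hQ0T, hsumpos, hp1, hST]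
  -- Step 2 : 0 ≤ Q(T)
  have hQT : 0 ≤ x (-T) * Real.cos (m*T) - x T * Real.sin (m*T) := by
    nlinarith [mul_nonneg hbc hCT.1.le, mul_nonneg hxT.le (by linarith [hCT.2.2] : (0:ℝ) ≤ Real.cos (m*T) - Real.sin (m*T))]
  -- Step 3 : 0 < x 0
  have hx0 : 0 < x 0 := by
    have := hQintpos 0 T le_rfl hT le_rfl
    linarith [hQ0T, this, hQT]
  -- Step 4 : 0 < x t for 0 < t ≤ T
  have hstep4 : ∀ t : ℝ, 0 < t → t ≤ T → 0 < x t := by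
    intro t ht htT
    have htI : t ∈ Set.Icc (-T) T := ⟨by linarith, htT⟩
    have hP0t := keyP 0 t le_rfl ht.le htT
    have hQ0t := keyQ 0 t le_rfl ht.le htT
    rw [base1] at hP0t
    rw [base2] at hQ0t
    have pyth := Real.sin_sq_add_cos_sq (m*t)
    have httrig := htrig (m*t) (by positivity) (by nlinarith)
    -- the combined integral
    have iP := iPint 0 t h0I htI
    have iQ := iQint 0 t h0I htI
    have ecomb : ∫ s in (0:ℝ)..t, (Real.cos (m*t) * ((g s + m * x (-s)) * Real.cos (m*s)
            - (g (-s) + m * x s) * Real.sin (m*s))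
          + Real.sin (m*t) * ((g (-s) + m * x s) * Real.cos (m*s)
            + (g s + m * x (-s)) * Real.sin (m*s)))
        = Real.cos (m*t) * (∫ s in (0:ℝ)..t, ((g s + m * x (-s)) * Real.cos (m*s)
            - (g (-s) + m * x s) * Real.sin (m*s)))
          + Real.sin (m*t) * ∫ s in (0:ℝ)..t, ((g (-s) + m * x s) * Real.cos (m*s)
            + (g s + m * x (-s)) * Real.sin (m*s)) :=
      my_comb 0 t (Real.cos (m*t)) (Real.sin (m*t)) _ _ iP iQ
    have hJpos : 0 < ∫ s in (0:ℝ)..t, (Real.cos (m*t) * ((g s + m * x (-s)) * Real.cos (m*s)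
            - (g (-s) + m * x s) * Real.sin (m*s))
          + Real.sin (m*t) * ((g (-s) + m * x s) * Real.cos (m*s)
            + (g s + m * x (-s)) * Real.sin (m*s))) := by
      apply my_intpos _ 0 t ht
      · exact (intervalIntegrable_iff_integrableOn_Icc_of_le ht.le).mp
          ((iP.const_mul (Real.cos (m*t))).add (iQ.const_mul (Real.sin (m*t))))
      · filter_upwards [haepos 0 t le_rfl htT] with s ⟨hs2, hs1, hsm⟩
        have e : Real.cos (m*t) * ((g s + m * x (-s)) * Real.cos (m*s)
              - (g (-s) + m * x s) * Real.sin (m*s))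
            + Real.sin (m*t) * ((g (-s) + m * x s) * Real.cos (m*s)
              + (g s + m * x (-s)) * Real.sin (m*s))
            = (g s + m * x (-s)) * Real.cos (m*t - m*s)
              + (g (-s) + m * x s) * Real.sin (m*t - m*s) := by
          rw [Real.cos_sub, Real.sin_sub]; ring
        rw [e]
        have hth := htrig (m*t - m*s) (by nlinarith [hsm.1, hsm.2])
          (by nlinarith [hsm.1, hsm.2])
        nlinarith [mul_pos hs2 hth.1, mul_nonneg hs1.le hth.2.1]
    have ex : x t = x 0 * (Real.cos (m*t) - Real.sin (m*t))
        + (Real.cos (m*t) * (∫ s in (0:ℝ)..t, ((g s + m * x (-s)) * Real.cos (m*s)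
            - (g (-s) + m * x s) * Real.sin (m*s)))
          + Real.sin (m*t) * ∫ s in (0:ℝ)..t, ((g (-s) + m * x s) * Real.cos (m*s)
            + (g s + m * x (-s)) * Real.sin (m*s))) := by
      linear_combination Real.cos (m*t) * hP0t - Real.sin (m*t) * hQ0t - x t * pyth
    rw [ecomb] at hJpos
    nlinarith [mul_nonneg hx0.le (by linarith [httrig.2.2] : (0:ℝ) ≤ Real.cos (m*t) - Real.sin (m*t)), hJpos, ex]
  -- Step 5 : negative side
  intro t htmem
  rcases lt_trichotomy t 0 with htneg | hzero | htpos
  · have hmt : 0 < -t := by linarith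
    have hmtT : -t ≤ T := by linarith [htmem.1]
    have hk := keyQ (-t) T hmt.le hmtT le_rfl
    rw [neg_neg] at hk
    have hint_nn := hQintnn (-t) T hmt.le hmtT le_rfl
    have hxmt := hstep4 (-t) hmt hmtT
    have strig := htrig (m * -t) (by positivity) (by nlinarith)
    have hsinpos : 0 < Real.sin (m * -t) :=
      Real.sin_pos_of_pos_of_lt_pi (by positivity) (by nlinarith)
    nlinarith [mul_pos hxmt hsinpos, strig.1, hk, hint_nn, hQT]
  · rw [hzero]; exact hx0
  · exact hstep4 t htpos htmem.2


/-- Let `x : [−T,T] → ℝ` be absolutely continuous (expressed by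
an integrable a.e. derivative `g` with `x(t) = x(−T) + ∫_{−T}^t g(s) ds`) with
`x(−T) − x(T) ≥ 0` and `x'(t) + m·x(−t) > 0` for a.e. `t ∈ I`.  Then:
(1) if `m ∈ (0, π/(4T)]` then `x > 0` on `I`;
(2) if `m ∈ [−π/(4T), 0)` then `x < 0` on `I`. -/
theorem stmt_15 (T m : ℝ) (hT : 0 < T) (x g : ℝ → ℝ)
    (hg : IntegrableOn g (Set.Icc (-T) T))
    (hrepr : ∀ t ∈ Set.Icc (-T) T, x t = x (-T) + ∫ s in (-T)..t, g s)
    (hbc : 0 ≤ x (-T) - x T)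
    (hpos : ∀ᵐ t ∂(volume.restrict (Set.Icc (-T) T)), 0 < g t + m * x (-t)) :
    (m ∈ Set.Ioc 0 (Real.pi / (4 * T)) → ∀ t ∈ Set.Icc (-T) T, 0 < x t) ∧
    (m ∈ Set.Ico (-(Real.pi / (4 * T))) 0 → ∀ t ∈ Set.Icc (-T) T, x t < 0) := by
  have hT2 : -T ≤ T := by linarith
  have hgiv : ∀ u : ℝ, u ∈ Set.Icc (-T) T → IntervalIntegrable g volume (-T) u := by
    intro u hu
    rw [intervalIntegrable_iff]
    apply hg.mono_set
    intro s hs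
    rcases Set.mem_uIoc.mp hs with ⟨h1, h2⟩ | ⟨h1, h2⟩
    · exact ⟨by linarith, by linarith [hu.2]⟩
    · exact ⟨by linarith [hu.1], by linarith⟩
  constructor
  · rintro ⟨hm0, hmle⟩
    have hmT : m * T ≤ Real.pi / 4 := by
      have h1 : m * T ≤ Real.pi / (4 * T) * T := mul_le_mul_of_nonneg_right hmle hT.le
      have h2 : Real.pi / (4 * T) * T = Real.pi / 4 := by field_simp
      linarith
    exact my_main T m hT hm0 hmT x g hg hrepr hbc hpos
  · rintro ⟨hmge, hm0⟩
    have hmT : -m * T ≤ Real.pi / 4 := by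
      have h1 : -m ≤ Real.pi / (4 * T) := by linarith
      have h2 : -m * T ≤ Real.pi / (4 * T) * T := mul_le_mul_of_nonneg_right h1 hT.le
      have h3 : Real.pi / (4 * T) * T = Real.pi / 4 := by field_simp
      linarith
    have hg' : IntegrableOn (fun s => g (-s)) (Set.Icc (-T) T) := my_int_neg hT.le hg
    have hrepr' : ∀ t ∈ Set.Icc (-T) T,
        (fun s => -x (-s)) t = (fun s => -x (-s)) (-T) + ∫ s in (-T)..t, (fun r => g (-r)) s := by
      intro t ht
      show -x (-t) = -x (-(-T)) + ∫ s in (-T)..t, g (-s)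
      rw [neg_neg]
      have e1 : ∫ s in (-T)..t, g (-s) = ∫ s in (-t)..T, g s := by
        rw [intervalIntegral.integral_comp_neg, neg_neg]
      have hmtI : (-t) ∈ Set.Icc (-T) T := ⟨by linarith [ht.2], by linarith [ht.1]⟩
      have hxT := hrepr T ⟨hT2, le_rfl⟩
      have hxmt := hrepr (-t) hmtI
      have hsub := intervalIntegral.integral_interval_sub_left
        (hgiv T ⟨hT2, le_rfl⟩) (hgiv (-t) hmtI)
      linarith [e1, hxT, hxmt, hsub]
    have hbc' : 0 ≤ (fun s => -x (-s)) (-T) - (fun s => -x (-s)) T := by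
      show 0 ≤ -x (-(-T)) - -x (-T)
      rw [neg_neg]
      linarith
    have hpos' : ∀ᵐ t ∂(volume.restrict (Set.Icc (-T) T)),
        0 < (fun r => g (-r)) t + (-m) * (fun s => -x (-s)) (-t) := by
      filter_upwards [my_ae_neg (c := T) hpos] with s hs
      show 0 < g (-s) + -m * -x (-(-s))
      rw [neg_neg]
      rw [neg_neg] at hs
      nlinarith [hs]
    intro t ht
    have hz := my_main T (-m) hT (by linarith) hmT (fun s => -x (-s)) (fun r => g (-r))
      hg' hrepr' hbc' hpos' (-t) ⟨by linarith [ht.2], by linarith [ht.1]⟩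
    have hz' : 0 < -x (-(-t)) := hz
    rw [neg_neg] at hz'
    linarith
end
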